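/- arXiv:2111.05638 — 5 statements merged into one kernel-verified Lean document; each statement's English description precedes it below -/
import Mathlib

section
/- For 0 ≤ r ≤ k, the partial trace over the last k−r tensor factors of the symmetrizing projector P_{s,k} on (C^N)^{⊗k} equals (N[k]/N[r]) · P_{s,r}, where N[m] = binom(N+m-1, m). -/
open scoped BigOperators

/-- The symmetrizing projector `P_{s,k}` on `(ℂ^N)^{⊗ k}`, with the tensor power
realized as functions `(Fin k → Fin N) → ℂ`. -/
noncomputable def Psym (N k : ℕ) : Matrix (Fin k → Fin N) (Fin k → Fin N) ℂ :=
  fun f g => (k.factorial : ℂ)⁻¹ * ∑ σ : Equiv.Perm (Fin k), if f = g ∘ ⇑σ then 1 else 0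

/-- Partial trace over the last `s` tensor factors of an operator on `(ℂ^N)^{⊗ (r+s)}`. -/
noncomputable def ptraceLast (N r s : ℕ)
    (M : Matrix (Fin (r + s) → Fin N) (Fin (r + s) → Fin N) ℂ) :
    Matrix (Fin r → Fin N) (Fin r → Fin N) ℂ :=
  fun f g => ∑ h : Fin s → Fin N, M (Fin.append f h) (Fin.append g h)

/-! ### Auxiliary machinery -/

/-- Decompose a permutation of `Fin (k+1)` according to the image of the last element. -/
def permE (k : ℕ) : Equiv.Perm (Fin (k+1)) ≃ Option (Fin k) × Equiv.Perm (Fin k) :=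
  (Equiv.permCongr finSuccEquivLast).trans Equiv.Perm.decomposeOption

section permE
variable {k : ℕ}

lemma permE_none_castSucc (τ : Equiv.Perm (Fin k)) (i : Fin k) :
    (permE k).symm (none, τ) i.castSucc = (τ i).castSucc := by
  simp [permE, Equiv.permCongr_symm, Equiv.permCongr_apply]

lemma permE_none_last (τ : Equiv.Perm (Fin k)) :
    (permE k).symm (none, τ) (Fin.last k) = Fin.last k := by
  simp [permE, Equiv.permCongr_symm, Equiv.permCongr_apply]

lemma permE_some_last (j : Fin k) (τ : Equiv.Perm (Fin k)) :
    (permE k).symm (some j, τ) (Fin.last k) = j.castSucc := by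
  simp [permE, Equiv.permCongr_symm, Equiv.permCongr_apply]

lemma permE_some_castSucc (j : Fin k) (τ : Equiv.Perm (Fin k)) (i : Fin k) :
    (permE k).symm (some j, τ) i.castSucc
      = if τ i = j then Fin.last k else (τ i).castSucc := by
  by_cases h : τ i = j
  · simp [permE, Equiv.permCongr_symm, Equiv.permCongr_apply, h]
  · simp [permE, Equiv.permCongr_symm, Equiv.permCongr_apply, h,
      Equiv.swap_apply_of_ne_of_ne, Option.some_ne_none]

variable {N : ℕ}

lemma cond_none (f g : Fin k → Fin N) (x : Fin N) (τ : Equiv.Perm (Fin k)) :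
    (Fin.snoc f x = Fin.snoc g x ∘ ⇑((permE k).symm (none, τ))) ↔ f = g ∘ ⇑τ := by
  constructor
  · intro h
    funext i
    have := congrFun h i.castSucc
    simpa [permE_none_castSucc] using this
  · intro h
    funext i
    refine Fin.lastCases ?_ ?_ i
    · simp [permE_none_last]
    · intro i
      simp [permE_none_castSucc, congrFun h i]

lemma cond_some (f g : Fin k → Fin N) (x : Fin N) (j : Fin k) (τ : Equiv.Perm (Fin k)) :
    (Fin.snoc f x = Fin.snoc g x ∘ ⇑((permE k).symm (some j, τ)))
      ↔ (x = g j ∧ f = g ∘ ⇑τ) := by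
  constructor
  · intro h
    have hx : x = g j := by
      have := congrFun h (Fin.last k)
      simpa [permE_some_last] using this
    refine ⟨hx, funext fun i => ?_⟩
    have := congrFun h i.castSucc
    rw [Function.comp_apply, permE_some_castSucc] at this
    by_cases hij : τ i = j
    · simpa [hij, hx] using this
    · simpa [hij] using this
  · rintro ⟨hx, hfg⟩
    funext i
    refine Fin.lastCases ?_ ?_ i
    · simp [permE_some_last, hx]
    · intro i
      rw [Function.comp_apply, permE_some_castSucc]
      by_cases hij : τ i = j
      · simp [hij, congrFun hfg i, hx]
      · simp [hij, congrFun hfg i]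

/-- The single-factor partial-trace step for the symmetrizer sums. -/
lemma step (N k : ℕ) (f g : Fin k → Fin N) :
    ∑ x : Fin N, ∑ σ : Equiv.Perm (Fin (k+1)),
      (if Fin.snoc f x = Fin.snoc g x ∘ ⇑σ then (1:ℂ) else 0)
    = ((N + k : ℕ) : ℂ) * ∑ τ : Equiv.Perm (Fin k), (if f = g ∘ ⇑τ then (1:ℂ) else 0) := by
  have reidx : ∀ x : Fin N,
      (∑ σ : Equiv.Perm (Fin (k+1)), (if Fin.snoc f x = Fin.snoc g x ∘ ⇑σ then (1:ℂ) else 0))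
      = ∑ p : Option (Fin k) × Equiv.Perm (Fin k),
          (if Fin.snoc f x = Fin.snoc g x ∘ ⇑((permE k).symm p) then (1:ℂ) else 0) := by
    intro x
    exact Fintype.sum_equiv (permE k) _ _ (fun σ => by rw [Equiv.symm_apply_apply])
  simp only [reidx, Fintype.sum_prod_type, Fintype.sum_option, cond_none, cond_some]
  rw [Finset.sum_add_distrib, Finset.sum_const, Finset.card_univ, Fintype.card_fin]
  have h2 : ∑ x : Fin N, ∑ j : Fin k, ∑ τ : Equiv.Perm (Fin k),
      (if x = g j ∧ f = g ∘ ⇑τ then (1:ℂ) else 0)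
      = (k : ℂ) * ∑ τ : Equiv.Perm (Fin k), (if f = g ∘ ⇑τ then (1:ℂ) else 0) := by
    rw [Finset.sum_comm]
    have : ∀ j : Fin k, ∑ x : Fin N, ∑ τ : Equiv.Perm (Fin k),
        (if x = g j ∧ f = g ∘ ⇑τ then (1:ℂ) else 0)
        = ∑ τ : Equiv.Perm (Fin k), (if f = g ∘ ⇑τ then (1:ℂ) else 0) := by
      intro j
      rw [Finset.sum_comm]
      refine Finset.sum_congr rfl fun τ _ => ?_
      simp only [ite_and]
      rw [Finset.sum_ite_eq' Finset.univ (g j) (fun _ => if f = g ∘ ⇑τ then (1:ℂ) else 0)]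
      simp
    simp only [this, Finset.sum_const, Finset.card_univ, Fintype.card_fin]
    simp [nsmul_eq_mul]
  rw [h2]
  push_cast
  ring

end permE

/-- Splitting off the last coordinate of a tuple. -/
def snocE (N s : ℕ) : ((Fin s → Fin N) × Fin N) ≃ (Fin (s+1) → Fin N) where
  toFun p := Fin.snoc p.1 p.2
  invFun h := (Fin.init h, h (Fin.last s))
  left_inv p := by simp
  right_inv h := by simp

/-- The key counting identity, by induction on the number of traced factors. -/
lemma key (N r s : ℕ) : ∀ (f g : Fin r → Fin N),
    (∑ h : Fin s → Fin N, ∑ σ : Equiv.Perm (Fin (r + s)),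
      (if Fin.append f h = Fin.append g h ∘ ⇑σ then (1:ℂ) else 0))
    = ((∏ j ∈ Finset.range s, (N + r + j) : ℕ) : ℂ) *
        ∑ τ : Equiv.Perm (Fin r), (if f = g ∘ ⇑τ then (1:ℂ) else 0) := by
  induction s with
  | zero =>
    intro f g
    have h0 : ∀ (q : Fin r → Fin N) (h : Fin 0 → Fin N),
        Fin.append q h = q := fun q h => by
      rw [Subsingleton.elim h Fin.elim0]; exact Fin.append_elim0 q
    simp only [h0, Finset.range_zero, Finset.prod_empty, Nat.cast_one, one_mul]
    rw [Fintype.sum_unique]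
    exact Fintype.sum_equiv (Equiv.refl (Equiv.Perm (Fin r))) _ _ (fun _ => rfl)
  | succ s ih =>
    intro f g
    show (∑ h : Fin (s+1) → Fin N, ∑ σ : Equiv.Perm (Fin ((r + s) + 1)),
        (if Fin.append f h = Fin.append g h ∘ ⇑σ then (1:ℂ) else 0)) = _
    have esum :
        (∑ h : Fin (s+1) → Fin N, ∑ σ : Equiv.Perm (Fin ((r + s) + 1)),
          (if Fin.append f h = Fin.append g h ∘ ⇑σ then (1:ℂ) else 0))
        = ∑ h' : Fin s → Fin N, ∑ x : Fin N, ∑ σ : Equiv.Perm (Fin ((r + s) + 1)),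
          (if Fin.append f (Fin.snoc h' x) = Fin.append g (Fin.snoc h' x) ∘ ⇑σ
            then (1:ℂ) else 0) := by
      rw [(Fintype.sum_equiv (snocE N s)
        (fun p => ∑ σ : Equiv.Perm (Fin ((r + s) + 1)),
          (if Fin.append f (Fin.snoc p.1 p.2) = Fin.append g (Fin.snoc p.1 p.2) ∘ ⇑σ
            then (1:ℂ) else 0))
        (fun h => ∑ σ : Equiv.Perm (Fin ((r + s) + 1)),
          (if Fin.append f h = Fin.append g h ∘ ⇑σ then (1:ℂ) else 0))
        (fun p => rfl)).symm]
      exact Fintype.sum_prod_type _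
    rw [esum]
    simp only [Fin.append_snoc]
    rw [Finset.sum_congr rfl
      (fun h' _ => step N (r + s) (Fin.append f h') (Fin.append g h')),
      ← Finset.mul_sum, ih f g, Finset.prod_range_succ]
    push_cast
    ring

/-- The scalar identity, as an identity of natural numbers. -/
lemma natkey (N r s : ℕ) (hor : N ≠ 0 ∨ r = 0) :
    (∏ j ∈ Finset.range s, (N + r + j)) * (r.factorial * (N + r - 1).choose r)
      = (r + s).factorial * (N + (r + s) - 1).choose (r + s) := by
  rcases Nat.eq_zero_or_pos N with hN | hN
  · subst hN
    have hr : r = 0 := hor.resolve_left (by simp)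
    subst hr
    cases s with
    | zero => simp
    | succ s =>
      have h0 : (0 + (0 + (s+1)) - 1).choose (0 + (s+1)) = 0 :=
        Nat.choose_eq_zero_of_lt (by omega)
      rw [Finset.prod_eq_zero (Finset.mem_range.mpr (Nat.succ_pos s)) rfl, h0]
      simp
  · induction s with
    | zero => simp
    | succ s ih =>
      have e1 : N + (r + s) - 1 + 1 = N + r + s := by omega
      have e2 : N + (r + (s+1)) - 1 = N + (r + s) - 1 + 1 := by omega
      have e3 : r + (s+1) = (r + s) + 1 := by omega
      have this' := Nat.add_one_mul_choose_eq (N + (r + s) - 1) (r + s)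
      rw [e1] at this'
      rw [Finset.prod_range_succ, e2, e3, Nat.factorial_succ, e1]
      calc (∏ j ∈ Finset.range s, (N + r + j)) * (N + r + s)
            * (r.factorial * (N + r - 1).choose r)
          = (N + r + s) * ((∏ j ∈ Finset.range s, (N + r + j))
              * (r.factorial * (N + r - 1).choose r)) := by ring
        _ = (N + r + s) * ((r + s).factorial * (N + (r + s) - 1).choose (r + s)) := by
            rw [ih]
        _ = ((N + r + s) * (N + (r + s) - 1).choose (r + s)) * (r + s).factorial := by ring
        _ = ((N + r + s).choose (r + s + 1) * (r + s + 1)) * (r + s).factorial := by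
            rw [this']
        _ = (r + s + 1) * (r + s).factorial * (N + r + s).choose (r + s + 1) := by ring

/-- For `0 ≤ r ≤ k` (here `k = r + s`), the partial trace over the last `k - r` factors
of `P_{s,k}` equals `(N[k]/N[r]) • P_{s,r}`, where `N[m] = binom(N+m-1, m)`. -/
theorem ptrace_Psym (N r s : ℕ) :
    ptraceLast N r s (Psym N (r + s)) =
      (((N + (r + s) - 1).choose (r + s) : ℂ) / ((N + r - 1).choose r : ℂ)) • Psym N r := by
  by_cases hE : N = 0 ∧ 0 < r
  · obtain ⟨hN, hr⟩ := hE
    subst hN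
    funext f g
    exact (f ⟨0, hr⟩).elim0
  · have hor : N ≠ 0 ∨ r = 0 := by omega
    funext f g
    show (∑ h : Fin s → Fin N, Psym N (r + s) (Fin.append f h) (Fin.append g h)) = _
    simp only [Psym, Matrix.smul_apply, smul_eq_mul]
    rw [← Finset.mul_sum, key N r s f g]
    have hc : ((N + r - 1).choose r : ℂ) ≠ 0 :=
      Nat.cast_ne_zero.mpr (Nat.choose_pos (by omega : r ≤ N + r - 1)).ne'
    have hf1 : (((r + s).factorial : ℕ) : ℂ) ≠ 0 :=
      Nat.cast_ne_zero.mpr (Nat.factorial_ne_zero _)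
    have hf2 : ((r.factorial : ℕ) : ℂ) ≠ 0 :=
      Nat.cast_ne_zero.mpr (Nat.factorial_ne_zero _)
    have hnat : (((∏ j ∈ Finset.range s, (N + r + j)) : ℕ) : ℂ)
          * ((r.factorial : ℂ) * ((N + r - 1).choose r : ℂ))
        = (((r + s).factorial : ℕ) : ℂ) * (((N + (r + s) - 1).choose (r + s) : ℕ) : ℂ) := by
      exact_mod_cast congrArg (Nat.cast : ℕ → ℂ) (natkey N r s hor)
    have hsc : (((r + s).factorial : ℂ))⁻¹ * (((∏ j ∈ Finset.range s, (N + r + j)) : ℕ) : ℂ)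
        = (((N + (r + s) - 1).choose (r + s) : ℕ) : ℂ) / (((N + r - 1).choose r : ℕ) : ℂ)
            * ((r.factorial : ℂ))⁻¹ := by
      push_cast at hnat ⊢
      field_simp
      linear_combination hnat
    linear_combination (∑ τ : Equiv.Perm (Fin r), (if f = g ∘ ⇑τ then (1:ℂ) else 0)) * hsc
end

section
/- If a bipartite density matrix ρ on C^N ⊗ C^N is separable, i.e., ρ = Σ_i p_i α_i ⊗ β_i with α_i, β_i positive semidefinite of trace 1 and p_i ≥ 0 summing to 1, then its partial transposition ρ^Γ = Σ_i p_i α_i ⊗ β_i^⊤ is positive semidefinite. -/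
open scoped BigOperators ComplexOrder
open Matrix

/-- Partial transposition on the second tensor factor: `⟨ij|ρ^Γ|kl⟩ = ⟨il|ρ|kj⟩`. -/
def ptranspose {N : ℕ} (ρ : Matrix (Fin N × Fin N) (Fin N × Fin N) ℂ) :
    Matrix (Fin N × Fin N) (Fin N × Fin N) ℂ :=
  fun p q => ρ (p.1, q.2) (q.1, p.2)

lemma kronecker_conjT {n : ℕ} (B D : Matrix (Fin n) (Fin n) ℂ) :
    Matrix.kroneckerMap (· * ·) Bᴴ Dᴴ = (Matrix.kroneckerMap (· * ·) B D)ᴴ := by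
  ext ⟨i, j⟩ ⟨k, l⟩
  simp [Matrix.kroneckerMap, Matrix.conjTranspose_apply, mul_comm]

lemma kronecker_posSemidef {n : ℕ} {A B : Matrix (Fin n) (Fin n) ℂ}
    (hA : A.PosSemidef) (hB : B.PosSemidef) :
    (Matrix.kroneckerMap (· * ·) A B).PosSemidef := by
  obtain ⟨C, rfl⟩ : ∃ C : Matrix (Fin n) (Fin n) ℂ, A = Cᴴ * C := by
    open scoped MatrixOrder in exact CStarAlgebra.nonneg_iff_eq_star_mul_self.mp hA.nonneg
  obtain ⟨D, rfl⟩ : ∃ D : Matrix (Fin n) (Fin n) ℂ, B = Dᴴ * D := by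
    open scoped MatrixOrder in exact CStarAlgebra.nonneg_iff_eq_star_mul_self.mp hB.nonneg
  rw [Matrix.mul_kronecker_mul, kronecker_conjT]
  exact Matrix.posSemidef_conjTranspose_mul_self _

/-- If a bipartite density matrix `ρ = Σ_i p_i α_i ⊗ β_i` is separable, then its partial
transposition is positive semidefinite. -/
theorem ptranspose_posSemidef_of_separable (N k : ℕ)
    (p : Fin k → ℝ) (α β : Fin k → Matrix (Fin N) (Fin N) ℂ)
    (hp : ∀ i, 0 ≤ p i) (hpsum : ∑ i, p i = 1)
    (hα : ∀ i, (α i).PosSemidef) (hαtr : ∀ i, (α i).trace = 1)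
    (hβ : ∀ i, (β i).PosSemidef) (hβtr : ∀ i, (β i).trace = 1)
    (ρ : Matrix (Fin N × Fin N) (Fin N × Fin N) ℂ)
    (hρ : ρ = ∑ i, ((p i : ℝ) : ℂ) • Matrix.kroneckerMap (· * ·) (α i) (β i)) :
    (ptranspose ρ).PosSemidef := by
  have hpt : ptranspose ρ = ∑ i, ((p i : ℝ) : ℂ) • Matrix.kroneckerMap (· * ·) (α i) (β i)ᵀ := by
    subst hρ
    ext ⟨a, b⟩ ⟨c, d⟩
    simp [ptranspose, Matrix.sum_apply, Matrix.kroneckerMap, Matrix.transpose_apply]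
  rw [hpt]
  refine Finset.sum_induction _ _ (fun a b ha hb => ha.add hb) Matrix.PosSemidef.zero ?_
  intro i _
  have h := kronecker_posSemidef (hα i) (hβ i).transpose
  refine Matrix.posSemidef_iff_dotProduct_mulVec.mpr ⟨?_, ?_⟩
  · show _ᴴ = _
    rw [Matrix.conjTranspose_smul, h.1]
    simp
  · intro x
    have hq := h.dotProduct_mulVec_nonneg x
    have hc : (0 : ℂ) ≤ ((p i : ℝ) : ℂ) := by exact_mod_cast Complex.zero_le_real.mpr (hp i)
    calc (0 : ℂ) ≤ ((p i : ℝ) : ℂ) * (star x ⬝ᵥ kroneckerMap (· * ·) (α i) (β i)ᵀ *ᵥ x) :=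
          mul_nonneg hc hq
      _ = star x ⬝ᵥ (((p i : ℝ) : ℂ) • kroneckerMap (· * ·) (α i) (β i)ᵀ) *ᵥ x := by
          rw [Matrix.smul_mulVec, dotProduct_smul, smul_eq_mul]
end

section
/- Cauchy interlacing for compressions: let A be a Hermitian operator on an n-dimensional Hilbert space and B = P A P restricted to a subspace N of codimension k, where P is the orthogonal projection onto N. Then for j = 1,…,n−k, the decreasingly ordered eigenvalues satisfy λ_j(A) ≥ λ_j(B) ≥ λ_{j+k}(A). -/
open scoped BigOperators Matrix

open Finset

local notation "⟪" x ", " y "⟫" => @inner ℂ _ _ x y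

/-- Two subspaces whose dimensions sum to more than the dimension of the ambient space
have a nonzero common element. -/
lemma aux_exists_ne_zero_mem_inf {E : Type*} [AddCommGroup E] [Module ℂ E]
    [FiniteDimensional ℂ E] (W1 W2 : Submodule ℂ E)
    (h : Module.finrank ℂ E < Module.finrank ℂ W1 + Module.finrank ℂ W2) :
    ∃ x, x ∈ W1 ⊓ W2 ∧ x ≠ 0 := by
  have h1 := Submodule.finrank_sup_add_finrank_inf_eq W1 W2
  have h2 : Module.finrank ℂ ↥(W1 ⊔ W2) ≤ Module.finrank ℂ E := Submodule.finrank_le _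
  have h3 : 0 < Module.finrank ℂ ↥(W1 ⊓ W2) := by omega
  haveI := Module.finrank_pos_iff.mp h3
  obtain ⟨⟨x, hx⟩, hx0⟩ := exists_ne (0 : ↥(W1 ⊓ W2))
  exact ⟨x, hx, by simpa [Submodule.mk_eq_zero] using hx0⟩

lemma aux_inner_sum_sum {E : Type*} [NormedAddCommGroup E] [InnerProductSpace ℂ E]
    {ι : Type*} [Fintype ι] [DecidableEq ι] {u : ι → E} (hu : Orthonormal ℂ u) (a b : ι → ℂ) :
    ⟪∑ i, a i • u i, ∑ i, b i • u i⟫ = ∑ i, starRingEnd ℂ (a i) * b i := by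
  simp_rw [inner_sum, inner_smul_right, sum_inner, inner_smul_left,
    orthonormal_iff_ite.mp hu, mul_ite, mul_one, mul_zero]
  simp [Finset.sum_ite_eq, mul_comm]

/-- Lower Rayleigh bound on the span of an orthonormal family of eigenvectors. -/
lemma aux_rayleigh_ge {E : Type*} [NormedAddCommGroup E] [InnerProductSpace ℂ E]
    {ι : Type*} [Fintype ι] {u : ι → E} (hu : Orthonormal ℂ u)
    (T : E →ₗ[ℂ] E) (μ : ι → ℝ) (hT : ∀ i, T (u i) = (μ i : ℂ) • u i)
    {c : ℝ} (hc : ∀ i, c ≤ μ i) {x : E}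
    (hx : x ∈ Submodule.span ℂ (Set.range u)) :
    c * Complex.re ⟪x, x⟫ ≤ Complex.re ⟪x, T x⟫ := by
  classical
  obtain ⟨a, rfl⟩ := (Submodule.mem_span_range_iff_exists_fun ℂ).mp hx
  have hTx : T (∑ i, a i • u i) = ∑ i, ((μ i : ℂ) * a i) • u i := by
    rw [map_sum]
    congr 1; funext i
    rw [LinearMap.map_smul, hT i, smul_smul, mul_comm]
  rw [hTx, aux_inner_sum_sum hu, aux_inner_sum_sum hu]
  have e1 : ∀ i : ι, starRingEnd ℂ (a i) * ((μ i : ℂ) * a i)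
      = ((μ i * Complex.normSq (a i) : ℝ) : ℂ) := by
    intro i
    rw [mul_comm (starRingEnd ℂ (a i)), mul_assoc, Complex.mul_conj]
    push_cast; ring
  have e2 : ∀ i : ι, starRingEnd ℂ (a i) * a i = ((Complex.normSq (a i) : ℝ) : ℂ) := by
    intro i; rw [mul_comm, Complex.mul_conj]
  simp_rw [e1, e2, ← Complex.ofReal_sum, Complex.ofReal_re, Finset.mul_sum]
  exact Finset.sum_le_sum fun i _ =>
    mul_le_mul_of_nonneg_right (hc i) (Complex.normSq_nonneg _)

/-- Upper Rayleigh bound on the span of an orthonormal family of eigenvectors. -/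
lemma aux_rayleigh_le {E : Type*} [NormedAddCommGroup E] [InnerProductSpace ℂ E]
    {ι : Type*} [Fintype ι] {u : ι → E} (hu : Orthonormal ℂ u)
    (T : E →ₗ[ℂ] E) (μ : ι → ℝ) (hT : ∀ i, T (u i) = (μ i : ℂ) • u i)
    {c : ℝ} (hc : ∀ i, μ i ≤ c) {x : E}
    (hx : x ∈ Submodule.span ℂ (Set.range u)) :
    Complex.re ⟪x, T x⟫ ≤ c * Complex.re ⟪x, x⟫ := by
  have := aux_rayleigh_ge hu (-T) (fun i => -μ i)
    (fun i => by rw [LinearMap.neg_apply, hT i]; push_cast; rw [neg_smul])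
    (c := -c) (fun i => neg_le_neg (hc i)) hx
  rw [LinearMap.neg_apply, inner_neg_right, Complex.neg_re] at this
  linarith

lemma aux_toEuclideanLin_mul {p q r : Type*} [Fintype p] [Fintype q] [Fintype r]
    [DecidableEq q] [DecidableEq r]
    (M : Matrix p q ℂ) (N : Matrix q r ℂ) (x : EuclideanSpace ℂ r) :
    Matrix.toEuclideanLin (M * N) x = Matrix.toEuclideanLin M (Matrix.toEuclideanLin N x) := by
  simp [Matrix.toEuclideanLin_apply, Matrix.mulVec_mulVec]

lemma aux_inner_comp {p q : Type*} [Fintype p] [Fintype q] [DecidableEq p] [DecidableEq q]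
    (M : Matrix p q ℂ) (x : EuclideanSpace ℂ q) (z : EuclideanSpace ℂ p) :
    ⟪Matrix.toEuclideanLin M x, z⟫ = ⟪x, Matrix.toEuclideanLin Mᴴ z⟫ := by
  rw [Matrix.toEuclideanLin_conjTranspose_eq_adjoint, LinearMap.adjoint_inner_right]

lemma aux_eigen {n : ℕ} {A : Matrix (Fin n) (Fin n) ℂ} (hA : A.IsHermitian) (i : Fin n) :
    Matrix.toEuclideanLin A (hA.eigenvectorBasis i)
      = ((hA.eigenvalues i : ℂ)) • hA.eigenvectorBasis i := by
  have h := hA.mulVec_eigenvectorBasis i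
  rw [Matrix.toEuclideanLin_apply]
  ext1 l
  have hl := congrFun h l
  simp only [Pi.smul_apply, smul_eq_mul] at hl ⊢
  rw [hl]
  simp [Complex.real_smul]

lemma aux_inner_self_pos {E : Type*} [NormedAddCommGroup E] [InnerProductSpace ℂ E]
    {x : E} (h : x ≠ 0) : 0 < Complex.re ⟪x, x⟫ := by
  have h2 : (⟪x, x⟫).re = ‖x‖ ^ 2 := by
    rw [← RCLike.re_to_complex, inner_self_eq_norm_sq]
  rw [h2]; exact pow_pos (norm_pos_iff.mpr h) 2

/-- Cauchy's interlacing theorem: let `A` be a Hermitian operator on an `n = m + k`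
dimensional Hilbert space and `B = Vᴴ A V` its compression to a codimension-`k` subspace
(`V` an isometry onto that subspace). If `μ` and `ν` enumerate the eigenvalues of `A`
and `B` in non-increasing order, then `μ_j ≥ ν_j ≥ μ_{j+k}` for `j = 1, …, m`. -/
theorem cauchy_interlacing (m k : ℕ)
    (A : Matrix (Fin (m + k)) (Fin (m + k)) ℂ) (hA : A.IsHermitian)
    (V : Matrix (Fin (m + k)) (Fin m) ℂ) (hV : Vᴴ * V = 1)
    (hB : (Vᴴ * A * V).IsHermitian)
    (μ : Fin (m + k) → ℝ) (ν : Fin m → ℝ)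
    (hμanti : Antitone μ) (hνanti : Antitone ν)
    (hμ : ∃ e : Equiv.Perm (Fin (m + k)), μ = hA.eigenvalues ∘ e)
    (hν : ∃ e : Equiv.Perm (Fin m), ν = hB.eigenvalues ∘ e) :
    ∀ j : Fin m, ν j ≤ μ (Fin.castAdd k j) ∧ μ (j.addNat k) ≤ ν j := by
  classical
  obtain ⟨e, he⟩ := hμ
  obtain ⟨f, hf⟩ := hν
  set TA : EuclideanSpace ℂ (Fin (m + k)) →ₗ[ℂ] EuclideanSpace ℂ (Fin (m + k)) :=
    Matrix.toEuclideanLin A with hTA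
  set TB : EuclideanSpace ℂ (Fin m) →ₗ[ℂ] EuclideanSpace ℂ (Fin m) :=
    Matrix.toEuclideanLin (Vᴴ * A * V) with hTB
  set VL : EuclideanSpace ℂ (Fin m) →ₗ[ℂ] EuclideanSpace ℂ (Fin (m + k)) :=
    Matrix.toEuclideanLin V with hVL
  set u : Fin (m + k) → EuclideanSpace ℂ (Fin (m + k)) :=
    fun i => hA.eigenvectorBasis (e i) with hu_def
  set w : Fin m → EuclideanSpace ℂ (Fin m) :=
    fun i => hB.eigenvectorBasis (f i) with hw_def
  have hu : Orthonormal ℂ u := hA.eigenvectorBasis.orthonormal.comp e e.injective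
  have hw : Orthonormal ℂ w := hB.eigenvectorBasis.orthonormal.comp f f.injective
  have hTu : ∀ i, TA (u i) = ((μ i : ℂ)) • u i := by
    intro i
    rw [hu_def, hTA, aux_eigen hA (e i), he]
    rfl
  have hTw : ∀ i, TB (w i) = ((ν i : ℂ)) • w i := by
    intro i
    rw [hw_def, hTB, aux_eigen hB (f i), hf]
    rfl
  have hVinner : ∀ x y : EuclideanSpace ℂ (Fin m), ⟪VL x, VL y⟫ = ⟪x, y⟫ := by
    intro x y
    rw [hVL, aux_inner_comp, ← aux_toEuclideanLin_mul, hV]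
    congr 1
    simp [Matrix.toEuclideanLin_apply]
  have hVcompress : ∀ y : EuclideanSpace ℂ (Fin m), ⟪VL y, TA (VL y)⟫ = ⟪y, TB y⟫ := by
    intro y
    rw [hVL, hTA, hTB, aux_inner_comp, ← aux_toEuclideanLin_mul, ← aux_toEuclideanLin_mul]
  intro j
  have hjm : (j : ℕ) < m := j.isLt
  constructor
  · -- ν j ≤ μ (castAdd k j)
    set g : Fin ((j : ℕ) + 1) → Fin m := fun l => ⟨l, by omega⟩ with hg_def
    have hg : Function.Injective g := by
      intro a b hab
      apply Fin.ext
      simpa [hg_def, Fin.ext_iff] using hab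
    set g2 : Fin (m + k - (j : ℕ)) → Fin (m + k) := fun i => ⟨(j : ℕ) + i, by omega⟩ with hg2_def
    have hg2 : Function.Injective g2 := by
      intro a b hab
      apply Fin.ext
      have := Fin.mk_eq_mk.mp hab
      omega
    have hwg : Orthonormal ℂ (fun l => w (g l)) := hw.comp g hg
    have hug : Orthonormal ℂ (fun i => u (g2 i)) := hu.comp g2 hg2
    have hVwg : Orthonormal ℂ (fun l => VL (w (g l))) :=
      orthonormal_iff_ite.mpr fun a b => by
        rw [hVinner]; exact orthonormal_iff_ite.mp hwg a b
    set W1 : Submodule ℂ (EuclideanSpace ℂ (Fin (m + k))) :=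
      Submodule.span ℂ (Set.range fun l => VL (w (g l))) with hW1
    set W2 : Submodule ℂ (EuclideanSpace ℂ (Fin (m + k))) :=
      Submodule.span ℂ (Set.range fun i => u (g2 i)) with hW2
    have hd1 : Module.finrank ℂ W1 = (j : ℕ) + 1 := by
      rw [hW1, finrank_span_eq_card hVwg.linearIndependent, Fintype.card_fin]
    have hd2 : Module.finrank ℂ W2 = m + k - (j : ℕ) := by
      rw [hW2, finrank_span_eq_card hug.linearIndependent, Fintype.card_fin]
    obtain ⟨x, hx, hx0⟩ := aux_exists_ne_zero_mem_inf W1 W2 (by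
      rw [hd1, hd2, finrank_euclideanSpace_fin]; omega)
    have hx2 := hx.2
    have hx1 : x ∈ Submodule.map VL (Submodule.span ℂ (Set.range fun l => w (g l))) := by
      rw [Submodule.map_span, ← Set.range_comp]
      exact hx.1
    obtain ⟨y, hy, rfl⟩ := hx1
    have hy0 : y ≠ 0 := fun h => hx0 (by rw [h, map_zero])
    have b1 : ν j * Complex.re ⟪y, y⟫ ≤ Complex.re ⟪y, TB y⟫ :=
      aux_rayleigh_ge hwg TB (fun l => ν (g l)) (fun l => hTw (g l))
        (fun l => hνanti (by simp [hg_def, Fin.le_def]; omega)) hy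
    have b2 : Complex.re ⟪VL y, TA (VL y)⟫
        ≤ μ (Fin.castAdd k j) * Complex.re ⟪VL y, VL y⟫ :=
      aux_rayleigh_le hug TA (fun i => μ (g2 i)) (fun i => hTu (g2 i))
        (fun i => hμanti (by simp [hg2_def, Fin.le_def])) hx2
    rw [hVcompress, hVinner] at b2
    have pos := aux_inner_self_pos hy0
    exact (mul_le_mul_iff_of_pos_right pos).mp (b1.trans b2)
  · -- μ (addNat k j) ≤ ν j
    set g : Fin (m - (j : ℕ)) → Fin m := fun l => ⟨(j : ℕ) + l, by omega⟩ with hg_def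
    have hg : Function.Injective g := by
      intro a b hab
      apply Fin.ext
      have := Fin.mk_eq_mk.mp hab
      omega
    set g2 : Fin ((j : ℕ) + k + 1) → Fin (m + k) := fun i => ⟨i, by omega⟩ with hg2_def
    have hg2 : Function.Injective g2 := by
      intro a b hab
      apply Fin.ext
      simpa [hg2_def, Fin.ext_iff] using hab
    have hwg : Orthonormal ℂ (fun l => w (g l)) := hw.comp g hg
    have hug : Orthonormal ℂ (fun i => u (g2 i)) := hu.comp g2 hg2
    have hVwg : Orthonormal ℂ (fun l => VL (w (g l))) :=
      orthonormal_iff_ite.mpr fun a b => by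
        rw [hVinner]; exact orthonormal_iff_ite.mp hwg a b
    set W1 : Submodule ℂ (EuclideanSpace ℂ (Fin (m + k))) :=
      Submodule.span ℂ (Set.range fun l => VL (w (g l))) with hW1
    set W2 : Submodule ℂ (EuclideanSpace ℂ (Fin (m + k))) :=
      Submodule.span ℂ (Set.range fun i => u (g2 i)) with hW2
    have hd1 : Module.finrank ℂ W1 = m - (j : ℕ) := by
      rw [hW1, finrank_span_eq_card hVwg.linearIndependent, Fintype.card_fin]
    have hd2 : Module.finrank ℂ W2 = (j : ℕ) + k + 1 := by
      rw [hW2, finrank_span_eq_card hug.linearIndependent, Fintype.card_fin]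
    obtain ⟨x, hx, hx0⟩ := aux_exists_ne_zero_mem_inf W1 W2 (by
      rw [hd1, hd2, finrank_euclideanSpace_fin]; omega)
    have hx2 := hx.2
    have hx1 : x ∈ Submodule.map VL (Submodule.span ℂ (Set.range fun l => w (g l))) := by
      rw [Submodule.map_span, ← Set.range_comp]
      exact hx.1
    obtain ⟨y, hy, rfl⟩ := hx1
    have hy0 : y ≠ 0 := fun h => hx0 (by rw [h, map_zero])
    have b1 : Complex.re ⟪y, TB y⟫ ≤ ν j * Complex.re ⟪y, y⟫ :=
      aux_rayleigh_le hwg TB (fun l => ν (g l)) (fun l => hTw (g l))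
        (fun l => hνanti (by simp [hg_def, Fin.le_def])) hy
    have b2 : μ (j.addNat k) * Complex.re ⟪VL y, VL y⟫
        ≤ Complex.re ⟪VL y, TA (VL y)⟫ :=
      aux_rayleigh_ge hug TA (fun i => μ (g2 i)) (fun i => hTu (g2 i))
        (fun i => hμanti (by simp [hg2_def, Fin.le_def]; omega)) hx2
    rw [hVcompress, hVinner] at b2
    have pos := aux_inner_self_pos hy0
    exact (mul_le_mul_iff_of_pos_right pos).mp (b2.trans b1)
end

section
/- Cut-vertex reduction for the circuit-counting polynomial: if G is a connected 2-in/2-out digraph and v is a cut vertex, then J(G;x) = (x+1)·J(G\v; x), where G\v is the connected digraph obtained by deleting v and reconnecting its incident edges in the orientation-preserving way that keeps the graph connected. -/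
open scoped BigOperators
open Polynomial

set_option linter.unusedSectionVars false
set_option maxHeartbeats 1000000

/-- Number of cycles (orbits, including fixed points) of a permutation. -/
def numCycles {E : Type*} [Fintype E] [DecidableEq E] (π : Equiv.Perm E) : ℕ :=
  π.cycleType.card + (Finset.univ.filter fun e => π e = e).card

section Part1
open Equiv Equiv.Perm

variable {E : Type*} [Fintype E] [DecidableEq E]


def scSetoid (π : Equiv.Perm E) : Setoid E :=
  ⟨π.SameCycle, ⟨Equiv.Perm.SameCycle.refl π, fun h => h.symm, fun h h' => h.trans h'⟩⟩

lemma sameCycle_of_pow {π : Equiv.Perm E} {x y : E} (n : ℕ) (h : (π ^ n) x = y) :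
    π.SameCycle x y := ⟨(n : ℤ), by rwa [zpow_natCast]⟩

lemma exists_pow_of_sameCycle {π : Equiv.Perm E} {x y : E} (h : π.SameCycle x y) :
    ∃ n : ℕ, (π ^ n) x = y := by
  obtain ⟨i, _, hi⟩ := h.exists_pow_eq'
  exact ⟨i, hi⟩

lemma eq_of_sameCycle_fixed {π : Equiv.Perm E} {x y : E} (h : π.SameCycle x y)
    (hx : π x = x) : x = y := by
  obtain ⟨i, hi⟩ := h
  rw [← hi, Equiv.Perm.zpow_apply_eq_self_of_apply_eq_self hx]

def cycSumFun (π : Equiv.Perm E) (x : E) :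
    ({c // c ∈ π.cycleFactorsFinset} ⊕ {e // π e = e}) :=
  if h : π x = x then Sum.inr ⟨x, h⟩ else
    Sum.inl ⟨π.cycleOf x, Equiv.Perm.cycleOf_mem_cycleFactorsFinset_iff.2
      (Equiv.Perm.mem_support.2 h)⟩

lemma numCycles_eq_nat_card (π : Equiv.Perm E) :
    numCycles π = Nat.card (Quotient (scSetoid π)) := by
  classical
  have wd : ∀ x y : E, π.SameCycle x y → cycSumFun π x = cycSumFun π y := by
    intro x y hxy
    by_cases hx : π x = x
    · obtain rfl := eq_of_sameCycle_fixed hxy hx; rfl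
    · have hy : ¬ π y = y := fun hy => hx ((eq_of_sameCycle_fixed hxy.symm hy) ▸ hy)
      rw [cycSumFun, cycSumFun, dif_neg hx, dif_neg hy]
      exact congrArg Sum.inl (Subtype.ext hxy.cycleOf_eq)
  set F : Quotient (scSetoid π) → ({c // c ∈ π.cycleFactorsFinset} ⊕ {e // π e = e}) :=
    Quotient.lift (cycSumFun π) wd with hF
  have hinj : Function.Injective F := by
    rintro ⟨x⟩ ⟨y⟩ hxy
    replace hxy : cycSumFun π x = cycSumFun π y := hxy
    rw [cycSumFun, cycSumFun] at hxy
    by_cases hx : π x = x <;> by_cases hy : π y = y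
    · rw [dif_pos hx, dif_pos hy, Sum.inr.injEq, Subtype.mk.injEq] at hxy
      exact Quotient.sound (hxy ▸ Equiv.Perm.SameCycle.refl π x)
    · rw [dif_pos hx, dif_neg hy] at hxy
      exact absurd hxy (by simp)
    · rw [dif_neg hx, dif_pos hy] at hxy
      exact absurd hxy (by simp)
    · rw [dif_neg hx, dif_neg hy, Sum.inl.injEq, Subtype.mk.injEq] at hxy
      apply Quotient.sound
      have hy' : y ∈ (π.cycleOf x).support := by
        rw [hxy, Equiv.Perm.mem_support_cycleOf_iff]
        exact ⟨Equiv.Perm.SameCycle.refl _ _, Equiv.Perm.mem_support.2 hy⟩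
      exact ((Equiv.Perm.mem_support_cycleOf_iff.1 hy').1 : π.SameCycle x y)
  have hsurj : Function.Surjective F := by
    rintro (⟨c, hc⟩ | ⟨x, hx⟩)
    · obtain ⟨x, hxc⟩ := (Equiv.Perm.IsCycle.nonempty_support
        (Equiv.Perm.mem_cycleFactorsFinset_iff.1 hc).1)
      refine ⟨⟦x⟧, ?_⟩
      have hcx : c = π.cycleOf x := Equiv.Perm.cycle_is_cycleOf hxc hc
      have hxs : ¬ π x = x := by
        have h' := Equiv.Perm.mem_cycleFactorsFinset_iff.1 hc
        rw [← h'.2 x hxc]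
        exact Equiv.Perm.mem_support.1 hxc
      show cycSumFun π x = _
      rw [cycSumFun, dif_neg hxs]
      exact congrArg Sum.inl (Subtype.ext hcx.symm)
    · refine ⟨⟦x⟧, ?_⟩
      show cycSumFun π x = _
      rw [cycSumFun, dif_pos hx]
  have key : Nat.card (Quotient (scSetoid π)) =
      Nat.card ({c // c ∈ π.cycleFactorsFinset} ⊕ {e // π e = e}) :=
    Nat.card_congr (Equiv.ofBijective F ⟨hinj, hsurj⟩)
  rw [key, Nat.card_sum, numCycles]
  congr 1
  · rw [Nat.card_eq_fintype_card, Fintype.card_coe, Equiv.Perm.cycleType_def,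
      Multiset.card_map]
    rfl
  · rw [Nat.card_eq_fintype_card, Fintype.card_subtype]

lemma sign_eq_numCycles (π : Equiv.Perm E) :
    Equiv.Perm.sign π = (-1 : ℤˣ) ^ (Fintype.card E + numCycles π) := by
  classical
  have h1 : π.cycleType.sum = π.support.card := Equiv.Perm.sum_cycleType π
  have hsupp : π.support = Finset.univ.filter (fun e => ¬ π e = e) := by
    ext e; simp [Equiv.Perm.mem_support]
  have h2 : (Finset.univ.filter fun e => π e = e).card + π.support.card = Fintype.card E := by
    rw [hsupp, Finset.card_filter_add_card_filter_not (p := fun e => π e = e)]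
    exact Finset.card_univ
  have h3 : Fintype.card E + numCycles π =
      (π.cycleType.sum + π.cycleType.card) + 2 * (Finset.univ.filter fun e => π e = e).card := by
    rw [numCycles, h1]; omega
  rw [h3, pow_add, pow_mul, ← Equiv.Perm.sign_of_cycleType]
  norm_num

lemma perm_pow_succ_apply (σ : Equiv.Perm E) (n : ℕ) (x : E) :
    (σ ^ (n + 1)) x = (σ ^ n) (σ x) := by
  rw [pow_succ, Equiv.Perm.mul_apply]

lemma perm_pow_succ_apply' (σ : Equiv.Perm E) (n : ℕ) (x : E) :
    (σ ^ (n + 1)) x = σ ((σ ^ n) x) := by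
  rw [pow_succ', Equiv.Perm.mul_apply]

lemma sameCycle_pow_closure {τ σ : Equiv.Perm E} (hstep : ∀ x, τ.SameCycle x (σ x)) :
    ∀ (n : ℕ) (x : E), τ.SameCycle x ((σ ^ n) x) := by
  intro n
  induction n with
  | zero => intro x; simpa using Equiv.Perm.SameCycle.refl τ x
  | succ n ih =>
    intro x
    rw [perm_pow_succ_apply]
    exact (hstep x).trans (ih (σ x))

lemma numCycles_swap_mul (τ : Equiv.Perm E) {a b : E} (hab : a ≠ b)
    (hs : τ.SameCycle a b) :
    numCycles (Equiv.swap a b * τ) = numCycles τ + 1 := by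
  classical
  set σ : Equiv.Perm E := Equiv.swap a b * τ with hσ
  have hσx : ∀ x, σ x = Equiv.swap a b (τ x) := fun x => rfl
  have hτx : ∀ x, τ x = Equiv.swap a b (σ x) := by
    intro x; rw [hσx, Equiv.swap_apply_self]
  -- step lemmas
  have step1 : ∀ x, τ.SameCycle x (σ x) := by
    intro x
    have hx1 : τ.SameCycle x (τ x) := ⟨1, by simp⟩
    by_cases h1 : τ x = a
    · rw [hσx, h1, Equiv.swap_apply_left]
      exact Equiv.Perm.SameCycle.trans (h1 ▸ hx1) hs
    · by_cases h2 : τ x = b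
      · rw [hσx, h2, Equiv.swap_apply_right]
        exact Equiv.Perm.SameCycle.trans (h2 ▸ hx1) hs.symm
      · rw [hσx, Equiv.swap_apply_of_ne_of_ne h1 h2]
        exact hx1
  have incl1 : ∀ x y, σ.SameCycle x y → τ.SameCycle x y := by
    intro x y hxy
    obtain ⟨n, hn⟩ := exists_pow_of_sameCycle hxy
    exact hn ▸ sameCycle_pow_closure step1 n x
  -- agreement off the orbit of a
  have agreepow : ∀ (n : ℕ) (x : E), ¬ τ.SameCycle x a → (σ ^ n) x = (τ ^ n) x := by
    intro n
    induction n with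
    | zero => intro x _; simp
    | succ n ih =>
      intro x hxa
      have hne1 : τ x ≠ a := fun h => hxa ⟨1, by simpa using h⟩
      have hne2 : τ x ≠ b := fun h => hxa (Equiv.Perm.SameCycle.trans
        (⟨1, by simpa using h⟩ : τ.SameCycle x b) hs.symm)
      have hagree : σ x = τ x := by rw [hσx, Equiv.swap_apply_of_ne_of_ne hne1 hne2]
      have hnext : ¬ τ.SameCycle (τ x) a := fun h =>
        hxa (Equiv.Perm.SameCycle.trans (⟨1, by simp⟩ : τ.SameCycle x (τ x)) h)
      rw [perm_pow_succ_apply, perm_pow_succ_apply, hagree, ih (τ x) hnext]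
  have incl2 : ∀ x y, ¬ τ.SameCycle x a → τ.SameCycle x y → σ.SameCycle x y := by
    intro x y hxa hxy
    obtain ⟨n, hn⟩ := exists_pow_of_sameCycle hxy
    exact sameCycle_of_pow n (by rw [agreepow n x hxa, hn])
  -- the τ-orbit of a splits into σ-orbits of a and b
  have orbitA : ∀ x, τ.SameCycle a x → σ.SameCycle a x ∨ σ.SameCycle b x := by
    have closed : ∀ y, (σ.SameCycle a y ∨ σ.SameCycle b y) →
        (σ.SameCycle a (τ y) ∨ σ.SameCycle b (τ y)) := by
      intro y hy
      by_cases h1 : σ y = a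
      · right
        rw [hτx, h1, Equiv.swap_apply_left]
      · by_cases h2 : σ y = b
        · left
          rw [hτx, h2, Equiv.swap_apply_right]
        · rw [hτx, Equiv.swap_apply_of_ne_of_ne h1 h2]
          exact hy.imp (fun h => h.trans (⟨1, by simp⟩ : σ.SameCycle y (σ y)))
            (fun h => h.trans (⟨1, by simp⟩ : σ.SameCycle y (σ y)))
    have hn : ∀ n : ℕ, σ.SameCycle a ((τ ^ n) a) ∨ σ.SameCycle b ((τ ^ n) a) := by
      intro n
      induction n with
      | zero => left; simpa using Equiv.Perm.SameCycle.refl σ a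
      | succ n ih =>
        rw [perm_pow_succ_apply']
        exact closed _ ih
    intro x hax
    obtain ⟨n, hn'⟩ := exists_pow_of_sameCycle hax
    exact hn' ▸ hn n
  -- counting: upper bound
  have upper : Nat.card (Quotient (scSetoid σ)) ≤ Nat.card (Quotient (scSetoid τ)) + 1 := by
    have wd : ∀ x y : E, σ.SameCycle x y →
        (if σ.SameCycle b x then (Sum.inr () : Quotient (scSetoid τ) ⊕ Unit)
          else Sum.inl ⟦x⟧) =
        (if σ.SameCycle b y then Sum.inr () else Sum.inl ⟦y⟧) := by
      intro x y hxy
      by_cases hbx : σ.SameCycle b x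
      · rw [if_pos hbx, if_pos (hbx.trans hxy)]
      · rw [if_neg hbx, if_neg (fun h => hbx (h.trans hxy.symm))]
        exact congrArg Sum.inl (Quotient.sound (incl1 x y hxy))
    set G : Quotient (scSetoid σ) → Quotient (scSetoid τ) ⊕ Unit :=
      Quotient.lift _ wd with hG
    have hGinj : Function.Injective G := by
      rintro ⟨x⟩ ⟨y⟩ hxy
      replace hxy : (if σ.SameCycle b x then (Sum.inr () : Quotient (scSetoid τ) ⊕ Unit)
          else Sum.inl ⟦x⟧) =
          (if σ.SameCycle b y then Sum.inr () else Sum.inl ⟦y⟧) := hxy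
      by_cases hbx : σ.SameCycle b x <;> by_cases hby : σ.SameCycle b y
      · exact Quotient.sound (hbx.symm.trans hby)
      · rw [if_pos hbx, if_neg hby] at hxy; exact absurd hxy (by simp)
      · rw [if_neg hbx, if_pos hby] at hxy; exact absurd hxy (by simp)
      · rw [if_neg hbx, if_neg hby, Sum.inl.injEq] at hxy
        have hxyτ : τ.SameCycle x y := Quotient.exact hxy
        by_cases hxa : τ.SameCycle x a
        · have hax : σ.SameCycle a x := (orbitA x hxa.symm).resolve_right hbx
          have hay : σ.SameCycle a y :=
            (orbitA y (hxa.symm.trans hxyτ)).resolve_right hby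
          exact Quotient.sound (hax.symm.trans hay)
        · exact Quotient.sound (incl2 x y hxa hxyτ)
    calc Nat.card (Quotient (scSetoid σ)) ≤ Nat.card (Quotient (scSetoid τ) ⊕ Unit) :=
          Nat.card_le_card_of_injective G hGinj
      _ = Nat.card (Quotient (scSetoid τ)) + 1 := by rw [Nat.card_sum]; simp
  -- counting: lower bound
  have lower : Nat.card (Quotient (scSetoid τ)) ≤ Nat.card (Quotient (scSetoid σ)) := by
    have wd : ∀ x y : E, σ.SameCycle x y → (⟦x⟧ : Quotient (scSetoid τ)) = ⟦y⟧ :=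
      fun x y hxy => Quotient.sound (incl1 x y hxy)
    refine Nat.card_le_card_of_surjective (Quotient.lift (fun x => (⟦x⟧ : Quotient (scSetoid τ))) wd) ?_
    rintro ⟨x⟩
    exact ⟨⟦x⟧, rfl⟩
  -- parity
  have hsign : Equiv.Perm.sign σ = - Equiv.Perm.sign τ := by
    rw [hσ, Equiv.Perm.sign_mul, Equiv.Perm.sign_swap hab, neg_one_mul]
  have hne : numCycles σ ≠ numCycles τ := by
    intro h
    rw [sign_eq_numCycles, sign_eq_numCycles, h] at hsign
    rcases Nat.even_or_odd (Fintype.card E + numCycles τ) with hpar | hpar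
    · rw [hpar.neg_one_pow] at hsign
      exact absurd hsign (by decide)
    · rw [hpar.neg_one_pow] at hsign
      exact absurd hsign (by decide)
  rw [numCycles_eq_nat_card, numCycles_eq_nat_card] at *
  omega

end Part1

/-- Projection of edges to same-cycle classes of the reduced permutation. -/
def projFun {V E : Type*} [DecidableEq V] [DecidableEq E] [Fintype E] (s : E → V) (v : V)
    (g1 : E) (e1' e2' : {e : E // s e ≠ v}) (π' : Equiv.Perm {e : E // s e ≠ v}) (e : E) :
    Quotient (scSetoid π') :=
  if h : s e = v then (if e = g1 then ⟦e1'⟧ else ⟦e2'⟧) else ⟦⟨e, h⟩⟧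

/-- The forward lift of a permutation of the reduced edge set. -/
def liftFun {V E : Type*} [DecidableEq V] [DecidableEq E] (s : E → V) (v : V) (g1 g2 : E)
    (e1' e2' : {e : E // s e ≠ v}) (π' : Equiv.Perm {e : E // s e ≠ v}) : E → E :=
  fun e => if e = e1'.1 then g1 else if e = e2'.1 then g2 else
    if h : s e = v then (if e = g1 then (π' e1').1 else (π' e2').1)
    else (π' ⟨e, h⟩).1
/-- The circuit-counting polynomial `J(G;x) = Σ_k j_k x^k` of a directed multigraph given
by source and target maps `s t : E → V`: cycle covers of `G` into edge-disjoint directed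
closed circuits correspond to permutations `π` of the edges such that `π e` starts where
`e` ends, and the number of circuits of a cover is the number of cycles of `π`. -/
noncomputable def circuitPoly {V E : Type*} [Fintype E] [DecidableEq E] [DecidableEq V]
    (s t : E → V) : Polynomial ℤ :=
  ∑ π ∈ Finset.univ.filter (fun π : Equiv.Perm E => ∀ e, s (π e) = t e),
    (X : Polynomial ℤ) ^ numCycles π

/-- A digraph is 2-in/2-out if every vertex has in-degree 2 and out-degree 2. -/
def TwoInTwoOut {V E : Type*} [Fintype E] [DecidableEq E] [DecidableEq V]
    (s t : E → V) : Prop :=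
  ∀ v : V, (Finset.univ.filter fun e => t e = v).card = 2 ∧
    (Finset.univ.filter fun e => s e = v).card = 2

/-- Adjacency in the underlying undirected multigraph. -/
def Adj {V E : Type*} (s t : E → V) (a b : V) : Prop :=
  ∃ e, (s e = a ∧ t e = b) ∨ (s e = b ∧ t e = a)

/-- Connectedness of the underlying undirected multigraph. -/
def ConnectedDigraph {V E : Type*} (s t : E → V) : Prop :=
  ∀ a b : V, Relation.ReflTransGen (Adj s t) a b

/-- `v` is a cut vertex: removing it disconnects the underlying undirected multigraph. -/
def IsCutVertex {V E : Type*} (s t : E → V) (v : V) : Prop :=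
  ∃ x y : V, x ≠ v ∧ y ≠ v ∧
    ¬ Relation.ReflTransGen
        (fun a b => ∃ e, s e ≠ v ∧ t e ≠ v ∧ ((s e = a ∧ t e = b) ∨ (s e = b ∧ t e = a)))
        x y

/-- Cut-vertex reduction for the circuit-counting polynomial: if `G` is a connected
2-in/2-out digraph and `v` a cut vertex, then `J(G;x) = (x+1)·J(G\v;x)`, where `G\v` is
obtained by deleting `v` and reconnecting its incident edges in an orientation-preserving
way (each in-edge `e` of `v` is merged with the out-edge `f e`), the reconnection being
such that the resulting digraph is connected. -/
theorem circuitPoly_cut_vertex {V E : Type*} [Fintype V] [Fintype E]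
    [DecidableEq V] [DecidableEq E] (s t : E → V)
    (h22 : TwoInTwoOut s t) (hconn : ConnectedDigraph s t)
    (v : V) (hcut : IsCutVertex s t v)
    (hnoloop : ∀ e, t e = v → s e ≠ v)
    (f : E → E)
    (hf_start : ∀ e, t e = v → s (f e) = v)
    (hf_inj : ∀ e e', t e = v → t e' = v → f e = f e' → e = e')
    (hf_surj : ∀ e', s e' = v → ∃ e, t e = v ∧ f e = e')
    -- the reduced digraph `G\v`, on the edge set `E' = {e | s e ≠ v}`:
    (s' t' : {e : E // s e ≠ v} → V)
    (hs' : ∀ e, s' e = s e.1)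
    (ht' : ∀ e, t' e = if t e.1 = v then t (f e.1) else t e.1)
    -- the reconnection keeps `G\v` connected (on the vertices other than `v`):
    (hconn' : ∀ a b : V, a ≠ v → b ≠ v → Relation.ReflTransGen (Adj s' t') a b) :
    circuitPoly s t = (X + 1) * circuitPoly s' t' := by
  classical
  -- in-edges and out-edges of v
  obtain ⟨e1, e2, he12, hI⟩ := Finset.card_eq_two.1 (h22 v).1
  have hte1 : t e1 = v := by
    have : e1 ∈ Finset.univ.filter fun e => t e = v := by rw [hI]; simp
    exact (Finset.mem_filter.1 this).2
  have hte2 : t e2 = v := by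
    have : e2 ∈ Finset.univ.filter fun e => t e = v := by rw [hI]; simp
    exact (Finset.mem_filter.1 this).2
  have hIn : ∀ e, t e = v → e = e1 ∨ e = e2 := by
    intro e he
    have : e ∈ Finset.univ.filter fun e => t e = v := by simp [he]
    rw [hI, Finset.mem_insert, Finset.mem_singleton] at this
    exact this
  set g1 := f e1 with hg1def
  set g2 := f e2 with hg2def
  have hsg1 : s g1 = v := hf_start e1 hte1
  have hsg2 : s g2 = v := hf_start e2 hte2
  have hg12 : g1 ≠ g2 := fun h => he12 (hf_inj e1 e2 hte1 hte2 h)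
  have hse1 : s e1 ≠ v := hnoloop e1 hte1
  have hse2 : s e2 ≠ v := hnoloop e2 hte2
  have htg1 : t g1 ≠ v := fun h => hnoloop g1 h hsg1
  have htg2 : t g2 ≠ v := fun h => hnoloop g2 h hsg2
  have hOut : ∀ e, s e = v → e = g1 ∨ e = g2 := by
    have hsub : ({g1, g2} : Finset E) ⊆ Finset.univ.filter fun e => s e = v := by
      intro e he
      rw [Finset.mem_insert, Finset.mem_singleton] at he
      rcases he with rfl | rfl <;> simp [hsg1, hsg2]
    have hO : Finset.univ.filter (fun e => s e = v) = {g1, g2} :=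
      (Finset.eq_of_subset_of_card_le hsub
        (by rw [(h22 v).2, Finset.card_insert_of_notMem (by simp [hg12]),
              Finset.card_singleton])).symm
    intro e he
    have : e ∈ ({g1, g2} : Finset E) := by rw [← hO]; simp [he]
    rw [Finset.mem_insert, Finset.mem_singleton] at this
    exact this
  have he1g1 : e1 ≠ g1 := fun h => hse1 (h ▸ hsg1)
  have he1g2 : e1 ≠ g2 := fun h => hse1 (h ▸ hsg2)
  have he2g1 : e2 ≠ g1 := fun h => hse2 (h ▸ hsg1)
  have he2g2 : e2 ≠ g2 := fun h => hse2 (h ▸ hsg2)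
  -- the avoid-v relation
  set R : V → V → Prop := fun a b => ∃ e, s e ≠ v ∧ t e ≠ v ∧
    ((s e = a ∧ t e = b) ∨ (s e = b ∧ t e = a)) with hRdef
  have hRsymm : Symmetric R := by
    rintro a b ⟨e, h1, h2, h3⟩
    exact ⟨e, h1, h2, h3.symm⟩
  have hRTsymm : Symmetric (Relation.ReflTransGen R) :=
    fun a b h => (@Relation.ReflTransGen.symmetric _ R ⟨fun a b h => hRsymm h⟩).symm a b h
  have hRne : ∀ a b, R a b → a ≠ v ∧ b ≠ v := by
    rintro a b ⟨e, h1, h2, (⟨rfl, rfl⟩ | ⟨rfl, rfl⟩)⟩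
    exacts [⟨h1, h2⟩, ⟨h2, h1⟩]
  -- every vertex other than v is connected (avoiding v) to a neighbour of v
  have hnb : ∀ c : V, c ≠ v → Relation.ReflTransGen R (s e1) c ∨
      Relation.ReflTransGen R (s e2) c ∨ Relation.ReflTransGen R (t g1) c ∨
      Relation.ReflTransGen R (t g2) c := by
    have hRTne : ∀ {p q : V}, Relation.ReflTransGen R p q → p ≠ v → q ≠ v := by
      intro p q h hp
      induction h with
      | refl => exact hp
      | tail _ hstep ih => exact (hRne _ _ hstep).2
    have main : ∀ c : V, Relation.ReflTransGen (Adj s t) v c → c = v ∨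
        (Relation.ReflTransGen R (s e1) c ∨ Relation.ReflTransGen R (s e2) c ∨
         Relation.ReflTransGen R (t g1) c ∨ Relation.ReflTransGen R (t g2) c) := by
      intro c h
      induction h with
      | refl => exact Or.inl rfl
      | @tail b c hab hbc ih =>
        by_cases hc : c = v
        · exact Or.inl hc
        right
        obtain ⟨e, he⟩ := hbc
        rcases ih with rfl | hR
        · rcases he with ⟨hse, hte⟩ | ⟨hse, hte⟩
          · rcases hOut e hse with rfl | rfl
            · exact Or.inr (Or.inr (Or.inl (hte ▸ Relation.ReflTransGen.refl)))
            · exact Or.inr (Or.inr (Or.inr (hte ▸ Relation.ReflTransGen.refl)))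
          · rcases hIn e hte with rfl | rfl
            · exact Or.inl (hse ▸ Relation.ReflTransGen.refl)
            · exact Or.inr (Or.inl (hse ▸ Relation.ReflTransGen.refl))
        · have hbv : b ≠ v := by
            rcases hR with h | h | h | h
            · exact hRTne h hse1
            · exact hRTne h hse2
            · exact hRTne h htg1
            · exact hRTne h htg2
          have hRbc : R b c := by
            rcases he with ⟨h1, h2⟩ | ⟨h1, h2⟩
            · exact ⟨e, h1 ▸ hbv, h2 ▸ hc, Or.inl ⟨h1, h2⟩⟩
            · exact ⟨e, h1 ▸ hc, h2 ▸ hbv, Or.inr ⟨h1, h2⟩⟩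
          rcases hR with h | h | h | h
          · exact Or.inl (h.tail hRbc)
          · exact Or.inr (Or.inl (h.tail hRbc))
          · exact Or.inr (Or.inr (Or.inl (h.tail hRbc)))
          · exact Or.inr (Or.inr (Or.inr (h.tail hRbc)))
    intro c hc
    exact (main c (hconn v c)).resolve_left hc
  -- the reachability class of `s e1` avoiding v
  set A : Finset V := Finset.univ.filter
    (fun a => a ≠ v ∧ Relation.ReflTransGen R (s e1) a) with hAdef
  have hA1 : s e1 ∈ A :=
    Finset.mem_filter.2 ⟨Finset.mem_univ _, hse1, Relation.ReflTransGen.refl⟩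
  have hAv : v ∉ A := by simp [hAdef]
  have hAcl : ∀ a b, a ∈ A → R a b → b ∈ A := by
    intro a b ha hr
    rw [hAdef, Finset.mem_filter] at ha ⊢
    exact ⟨Finset.mem_univ b, (hRne a b hr).2, ha.2.2.tail hr⟩
  have hAclRT : ∀ a b, a ∈ A → Relation.ReflTransGen R a b → b ∈ A := by
    intro a b ha hr
    induction hr with
    | refl => exact ha
    | tail _ h ih => exact hAcl _ _ ih h
  -- in/out degree counting for A
  have hcount : (Finset.univ.filter fun e => s e = v ∧ t e ∈ A).card =
      (Finset.univ.filter fun e => t e = v ∧ s e ∈ A).card := by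
    have hAne : ∀ a, a ∈ A → a ≠ v := fun a ha h => hAv (h ▸ ha)
    have hfib : ∀ (u : E → V), (∀ a, (Finset.univ.filter fun e => u e = a).card = 2) →
        (Finset.univ.filter fun e => u e ∈ A).card = 2 * A.card := by
      intro u hu
      rw [Finset.card_eq_sum_card_fiberwise (f := u) (t := A) (s := Finset.univ.filter fun e => u e ∈ A)
        (fun e he => (Finset.mem_filter.1 he).2)]
      have hf : ∀ a ∈ A, ((Finset.univ.filter fun e => u e ∈ A).filter
          fun e => u e = a) = Finset.univ.filter fun e => u e = a := by
        intro a ha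
        ext e
        simp only [Finset.mem_filter, Finset.mem_univ, true_and]
        exact ⟨fun h => h.2, fun h => ⟨h ▸ ha, h⟩⟩
      rw [Finset.sum_congr rfl (fun a ha => by rw [hf a ha, hu a])]
      rw [Finset.sum_const, smul_eq_mul, mul_comm]
    have hsum_t : (Finset.univ.filter fun e => t e ∈ A).card = 2 * A.card :=
      hfib t (fun a => (h22 a).1)
    have hsum_s : (Finset.univ.filter fun e => s e ∈ A).card = 2 * A.card :=
      hfib s (fun a => (h22 a).2)
    have hsplit_t : ((Finset.univ.filter fun e => t e ∈ A).filter
          fun e => s e ∈ A).card +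
        ((Finset.univ.filter fun e => t e ∈ A).filter fun e => ¬ s e ∈ A).card =
        (Finset.univ.filter fun e => t e ∈ A).card :=
      Finset.card_filter_add_card_filter_not (p := fun e => s e ∈ A)
    have hsplit_s : ((Finset.univ.filter fun e => s e ∈ A).filter
          fun e => t e ∈ A).card +
        ((Finset.univ.filter fun e => s e ∈ A).filter fun e => ¬ t e ∈ A).card =
        (Finset.univ.filter fun e => s e ∈ A).card :=
      Finset.card_filter_add_card_filter_not (p := fun e => t e ∈ A)
    have hb_t : ((Finset.univ.filter fun e => t e ∈ A).filter fun e => ¬ s e ∈ A) =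
        (Finset.univ.filter fun e => s e = v ∧ t e ∈ A) := by
      ext e
      simp only [Finset.filter_filter, Finset.mem_filter, Finset.mem_univ, true_and]
      constructor
      · rintro ⟨h1, h2⟩
        refine ⟨?_, h1⟩
        by_contra hsv
        exact h2 (hAcl _ _ h1 ⟨e, hsv, hAne _ h1, Or.inr ⟨rfl, rfl⟩⟩)
      · rintro ⟨h1, h2⟩
        exact ⟨h2, fun hmem => hAv (h1 ▸ hmem)⟩
    have hb_s : ((Finset.univ.filter fun e => s e ∈ A).filter fun e => ¬ t e ∈ A) =
        (Finset.univ.filter fun e => t e = v ∧ s e ∈ A) := by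
      ext e
      simp only [Finset.filter_filter, Finset.mem_filter, Finset.mem_univ, true_and]
      constructor
      · rintro ⟨h1, h2⟩
        refine ⟨?_, h1⟩
        by_contra htv
        exact h2 (hAcl _ _ h1 ⟨e, hAne _ h1, htv, Or.inl ⟨rfl, rfl⟩⟩)
      · rintro ⟨h1, h2⟩
        exact ⟨h2, fun hmem => hAv (h1 ▸ hmem)⟩
    have hi : ((Finset.univ.filter fun e => t e ∈ A).filter fun e => s e ∈ A) =
        ((Finset.univ.filter fun e => s e ∈ A).filter fun e => t e ∈ A) := by
      ext e
      simp only [Finset.filter_filter, Finset.mem_filter, Finset.mem_univ, true_and]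
      exact and_comm
    rw [hb_t] at hsplit_t
    rw [hb_s] at hsplit_s
    rw [hi] at hsplit_t
    omega
  -- the crucial cut-vertex fact
  have hkey : t g1 ∉ A := by
    intro HA
    by_cases hs2 : s e2 ∈ A
    · have hin2 : (Finset.univ.filter fun e => t e = v ∧ s e ∈ A) = {e1, e2} := by
        ext e
        simp only [Finset.mem_filter, Finset.mem_univ, true_and, Finset.mem_insert,
          Finset.mem_singleton]
        constructor
        · rintro ⟨h1, _⟩; exact hIn e h1
        · rintro (rfl | rfl)
          · exact ⟨hte1, hA1⟩
          · exact ⟨hte2, hs2⟩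
      have hcard2 : (Finset.univ.filter fun e => s e = v ∧ t e ∈ A).card = 2 := by
        rw [hcount, hin2, Finset.card_insert_of_notMem (by simp [he12]),
          Finset.card_singleton]
      have hsub : (Finset.univ.filter fun e => s e = v ∧ t e ∈ A) ⊆
          ({g1, g2} : Finset E) := by
        intro e he
        rcases hOut e ((Finset.mem_filter.1 he).2).1 with rfl | rfl <;> simp
      have heq2 : (Finset.univ.filter fun e => s e = v ∧ t e ∈ A) = {g1, g2} :=
        Finset.eq_of_subset_of_card_le hsub
          (by rw [hcard2, Finset.card_insert_of_notMem (by simp [hg12]),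
            Finset.card_singleton])
      have htg2A : t g2 ∈ A := by
        have : g2 ∈ (Finset.univ.filter fun e => s e = v ∧ t e ∈ A) := by
          rw [heq2]; simp
        exact ((Finset.mem_filter.1 this).2).2
      obtain ⟨x, y, hxv, hyv, hxy⟩ := hcut
      apply hxy
      have hAall : ∀ c : V, c ≠ v → c ∈ A := by
        intro c hc
        rcases hnb c hc with h | h | h | h
        · exact hAclRT _ _ hA1 h
        · exact hAclRT _ _ hs2 h
        · exact hAclRT _ _ HA h
        · exact hAclRT _ _ htg2A h
      have hx := (Finset.mem_filter.1 (hAall x hxv)).2.2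
      have hy := (Finset.mem_filter.1 (hAall y hyv)).2.2
      exact Relation.ReflTransGen.trans (hRTsymm hx) hy
    · have hin1 : (Finset.univ.filter fun e => t e = v ∧ s e ∈ A) = {e1} := by
        ext e
        simp only [Finset.mem_filter, Finset.mem_univ, true_and, Finset.mem_singleton]
        constructor
        · rintro ⟨h1, h2⟩
          rcases hIn e h1 with rfl | rfl
          · rfl
          · exact absurd h2 hs2
        · rintro rfl
          exact ⟨hte1, hA1⟩
      have hcard1 : (Finset.univ.filter fun e => s e = v ∧ t e ∈ A).card = 1 := by
        rw [hcount, hin1, Finset.card_singleton]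
      have hg1mem : g1 ∈ (Finset.univ.filter fun e => s e = v ∧ t e ∈ A) :=
        Finset.mem_filter.2 ⟨Finset.mem_univ _, hsg1, HA⟩
      have heq1 : ({g1} : Finset E) = Finset.univ.filter fun e => s e = v ∧ t e ∈ A :=
        Finset.eq_of_subset_of_card_le (Finset.singleton_subset_iff.2 hg1mem)
          (by rw [hcard1, Finset.card_singleton])
      have htg2A : t g2 ∉ A := by
        intro hmem
        have hg2mem : g2 ∈ (Finset.univ.filter fun e => s e = v ∧ t e ∈ A) :=
          Finset.mem_filter.2 ⟨Finset.mem_univ _, hsg2, hmem⟩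
        rw [← heq1, Finset.mem_singleton] at hg2mem
        exact hg12 hg2mem.symm
      have hstep' : ∀ a c : V, Adj s' t' a c → (a ∈ A ↔ c ∈ A) := by
        rintro a c ⟨x, hx⟩
        have hiff : (s' x ∈ A ↔ t' x ∈ A) := by
          by_cases hxv : t x.1 = v
          · rcases hIn x.1 hxv with h | h
            · rw [hs', ht' x, if_pos hxv, h]
              exact iff_of_true hA1 HA
            · rw [hs', ht' x, if_pos hxv, h]
              exact iff_of_false hs2 htg2A
          · rw [hs', ht' x, if_neg hxv]
            constructor
            · intro h
              exact hAcl _ _ h ⟨x.1, x.2, hxv, Or.inl ⟨rfl, rfl⟩⟩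
            · intro h
              exact hAcl _ _ h ⟨x.1, x.2, hxv, Or.inr ⟨rfl, rfl⟩⟩
        rcases hx with ⟨h1, h2⟩ | ⟨h1, h2⟩
        · rw [← h1, ← h2]; exact hiff
        · rw [← h1, ← h2]; exact hiff.symm
      have hinv : ∀ a c : V, Relation.ReflTransGen (Adj s' t') a c → (a ∈ A ↔ c ∈ A) := by
        intro a c h
        induction h with
        | refl => exact Iff.rfl
        | tail _ hs ih => exact ih.trans (hstep' _ _ hs)
      exact hs2 ((hinv _ _ (hconn' (s e1) (s e2) hse1 hse2)).1 hA1)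
  -- the reduced edge type
  set e1' : {e : E // s e ≠ v} := ⟨e1, hse1⟩ with he1'def
  set e2' : {e : E // s e ≠ v} := ⟨e2, hse2⟩ with he2'def
  have hIn' : ∀ x : {e : E // s e ≠ v}, t x.1 = v → x = e1' ∨ x = e2' := by
    intro x hx
    rcases hIn x.1 hx with h | h
    · exact Or.inl (Subtype.ext h)
    · exact Or.inr (Subtype.ext h)
  have hval' : ∀ (π' : Equiv.Perm {e : E // s e ≠ v}) (z : {e : E // s e ≠ v}), (π' z).1 ≠ g1 ∧ (π' z).1 ≠ g2 := by
    intro π' z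
    constructor
    · intro h; exact (π' z).2 (h ▸ hsg1)
    · intro h; exact (π' z).2 (h ▸ hsg2)
  -- the lift construction
  have hinjL : ∀ π' : Equiv.Perm {e : E // s e ≠ v},
      Function.Injective (liftFun s v g1 g2 e1' e2' π') := by
    intro π' x y h
    unfold liftFun at h
    have hsub : ∀ (a b : {e : E // s e ≠ v}), (π' a).1 = (π' b).1 → a = b :=
      fun a b hab => π'.injective (Subtype.ext hab)
    split_ifs at h with q1 q2 q3 q4 q5 q6 q7 q8 q9 q10 q11 q12 q13 q14 q15 q16
    all_goals first
    | exact absurd h hg12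
    | exact absurd h hg12.symm
    | exact absurd h (hval' π' _).1.symm
    | exact absurd h (hval' π' _).2.symm
    | exact absurd h (hval' π' _).1
    | exact absurd h (hval' π' _).2
    | exact (show x = ↑e1' by assumption).trans (show y = ↑e1' by assumption).symm
    | exact (show x = ↑e2' by assumption).trans (show y = ↑e2' by assumption).symm
    | exact congrArg Subtype.val (hsub _ _ h)
    | exact absurd (congrArg Subtype.val (hsub _ _ h)) he12
    | exact absurd (congrArg Subtype.val (hsub _ _ h)).symm he12
    | exact absurd (congrArg Subtype.val (hsub _ _ h)) (by assumption)
    | exact absurd (congrArg Subtype.val (hsub _ _ h)).symm (by assumption)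
    | exact (show x = g1 by assumption).trans (show y = g1 by assumption).symm
    | exact ((hOut x (by assumption)).resolve_left (by assumption)).trans
        ((hOut y (by assumption)).resolve_left (by assumption)).symm
  set Lp : Equiv.Perm {e : E // s e ≠ v} → Equiv.Perm E := fun π' =>
    Equiv.ofBijective _ (Finite.injective_iff_bijective.1 (hinjL π')) with hLpdef
  have hLp : ∀ (π' : Equiv.Perm {e : E // s e ≠ v}) (e : E),
      Lp π' e = liftFun s v g1 g2 e1' e2' π' e := fun _ _ => rfl
  -- application values of the lift
  have hLpe1 : ∀ π', Lp π' e1 = g1 := by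
    intro π'; rw [hLp, liftFun]; simp [he1'def]
  have hLpe2 : ∀ π', Lp π' e2 = g2 := by
    intro π'; rw [hLp, liftFun]
    simp [he12.symm, he1'def, he2'def]
  have hLpg1 : ∀ π', Lp π' g1 = (π' e1').1 := by
    intro π'; rw [hLp, liftFun]
    rw [if_neg (by simpa using he1g1.symm), if_neg (by simpa using he2g1.symm), dif_pos hsg1,
      if_pos rfl]
  have hLpg2 : ∀ π', Lp π' g2 = (π' e2').1 := by
    intro π'; rw [hLp, liftFun]
    rw [if_neg (by simpa using he1g2.symm), if_neg (by simpa using he2g2.symm), dif_pos hsg2,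
      if_neg (Ne.symm hg12)]
  have hLpother : ∀ (π' : Equiv.Perm {e : E // s e ≠ v}) (x : {e : E // s e ≠ v}), x ≠ e1' → x ≠ e2' →
      Lp π' x.1 = (π' x).1 := by
    intro π' x h1 h2
    rw [hLp, liftFun]
    rw [if_neg (fun h => h1 (Subtype.ext h)), if_neg (fun h => h2 (Subtype.ext h)),
      dif_neg x.2]
  -- validity of lifts
  have hLpvalid : ∀ π' : Equiv.Perm {e : E // s e ≠ v}, (∀ x, s' (π' x) = t' x) →
      ∀ e, s (Lp π' e) = t e := by
    intro π' hv' e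
    rcases eq_or_ne e e1 with rfl | h1
    · rw [hLpe1 π', hsg1, hte1]
    rcases eq_or_ne e e2 with rfl | h2
    · rw [hLpe2 π', hsg2, hte2]
    by_cases hsv : s e = v
    · rcases hOut e hsv with rfl | rfl
      · rw [hLpg1 π', ← hs', hv', ht', he1'def]
        simp [hte1, hg1def]
      · rw [hLpg2 π', ← hs', hv', ht', he2'def]
        simp [hte2, hg2def]
    · have htev : t e ≠ v := fun h => by
        rcases hIn e h with rfl | rfl
        · exact h1 rfl
        · exact h2 rfl
      have hx1 : (⟨e, hsv⟩ : {e : E // s e ≠ v}) ≠ e1' := fun h => h1 (congrArg Subtype.val h)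
      have hx2 : (⟨e, hsv⟩ : {e : E // s e ≠ v}) ≠ e2' := fun h => h2 (congrArg Subtype.val h)
      have := hLpother π' ⟨e, hsv⟩ hx1 hx2
      rw [this, ← hs', hv', ht']
      simp [htev]
  have hswaps : ∀ e : E, s (Equiv.swap g1 g2 e) = s e := by
    intro e
    rcases eq_or_ne e g1 with rfl | h1
    · rw [Equiv.swap_apply_left, hsg2, hsg1]
    rcases eq_or_ne e g2 with rfl | h2
    · rw [Equiv.swap_apply_right, hsg1, hsg2]
    · rw [Equiv.swap_apply_of_ne_of_ne h1 h2]
  -- same-cycle transport through the lift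
  have hstepL : ∀ (π' : Equiv.Perm {e : E // s e ≠ v}) (z : {e : E // s e ≠ v}),
      (Lp π').SameCycle z.1 ((π' z).1) := by
    intro π' z
    by_cases hz : t z.1 = v
    · rcases hIn' z hz with h | h
      · refine sameCycle_of_pow 2 ?_
        rw [pow_two, Equiv.Perm.mul_apply, h, show e1'.1 = e1 from rfl, hLpe1 π', hLpg1 π']
      · refine sameCycle_of_pow 2 ?_
        rw [pow_two, Equiv.Perm.mul_apply, h, show e2'.1 = e2 from rfl, hLpe2 π', hLpg2 π']
    · refine sameCycle_of_pow 1 ?_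
      rw [pow_one]
      exact hLpother π' z (fun h => hz (by rw [h, he1'def]; exact hte1))
        (fun h => hz (by rw [h, he2'def]; exact hte2))
  have hmap : ∀ (π' : Equiv.Perm {e : E // s e ≠ v}) (x y : {e : E // s e ≠ v}), π'.SameCycle x y →
      (Lp π').SameCycle x.1 y.1 := by
    intro π' x y hxy
    have hpow : ∀ (n : ℕ) (z : {e : E // s e ≠ v}),
        (Lp π').SameCycle z.1 (((π' ^ n) z).1) := by
      intro n
      induction n with
      | zero => intro z; simpa using Equiv.Perm.SameCycle.refl (Lp π') z.1
      | succ n ih =>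
        intro z
        have he : (π' ^ (n + 1)) z = π' ((π' ^ n) z) := perm_pow_succ_apply' π' n z
        rw [he]
        exact (ih z).trans (hstepL π' ((π' ^ n) z))
    obtain ⟨n, hn⟩ := exists_pow_of_sameCycle hxy
    exact hn ▸ hpow n x
  -- the lift preserves the number of cycles
  have hnc : ∀ π' : Equiv.Perm {e : E // s e ≠ v}, numCycles (Lp π') = numCycles π' := by
    intro π'
    have hstep : ∀ e, projFun s v g1 e1' e2' π' (Lp π' e) = projFun s v g1 e1' e2' π' e := by
      intro e
      rcases eq_or_ne e e1 with rfl | h1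
      · rw [hLpe1 π', projFun, projFun, dif_pos hsg1, if_pos rfl, dif_neg hse1]
      rcases eq_or_ne e e2 with rfl | h2
      · rw [hLpe2 π', projFun, projFun, dif_pos hsg2, if_neg (Ne.symm hg12), dif_neg hse2]
      by_cases hsv : s e = v
      · rcases hOut e hsv with rfl | rfl
        · rw [hLpg1 π', projFun, projFun, dif_neg (π' e1').2, dif_pos hsv, if_pos rfl]
          exact Quotient.sound (Equiv.Perm.SameCycle.symm (⟨1, by simp⟩ : π'.SameCycle e1' (π' e1')))
        · rw [hLpg2 π', projFun, projFun, dif_neg (π' e2').2, dif_pos hsv,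
            if_neg (Ne.symm hg12)]
          exact Quotient.sound (Equiv.Perm.SameCycle.symm (⟨1, by simp⟩ : π'.SameCycle e2' (π' e2')))
      · have hx1 : (⟨e, hsv⟩ : {e : E // s e ≠ v}) ≠ e1' := fun h => h1 (congrArg Subtype.val h)
        have hx2 : (⟨e, hsv⟩ : {e : E // s e ≠ v}) ≠ e2' := fun h => h2 (congrArg Subtype.val h)
        rw [hLpother π' ⟨e, hsv⟩ hx1 hx2, projFun, projFun,
          dif_neg (π' ⟨e, hsv⟩).2, dif_neg hsv]
        exact Quotient.sound
          (Equiv.Perm.SameCycle.symm (⟨1, by simp⟩ : π'.SameCycle ⟨e, hsv⟩ (π' ⟨e, hsv⟩)))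
    have hpowstep : ∀ (n : ℕ) (e : E),
        projFun s v g1 e1' e2' π' ((Lp π' ^ n) e) = projFun s v g1 e1' e2' π' e := by
      intro n
      induction n with
      | zero => intro e; rw [pow_zero]; rfl
      | succ n ih =>
        intro e
        rw [perm_pow_succ_apply' (Lp π') n e, hstep, ih]
    have wdG : ∀ a b : E, (Lp π').SameCycle a b →
        projFun s v g1 e1' e2' π' a = projFun s v g1 e1' e2' π' b := by
      intro a b hab
      obtain ⟨n, hn⟩ := exists_pow_of_sameCycle hab
      rw [← hn, hpowstep]
    have wdF : ∀ a b : {e : E // s e ≠ v}, π'.SameCycle a b →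
        (⟦a.1⟧ : Quotient (scSetoid (Lp π'))) = ⟦b.1⟧ :=
      fun a b hab => Quotient.sound (hmap π' a b hab)
    have hGF : ∀ q : Quotient (scSetoid π'),
        Quotient.lift (projFun s v g1 e1' e2' π') wdG
          (Quotient.lift (fun x : {e : E // s e ≠ v} =>
            (⟦x.1⟧ : Quotient (scSetoid (Lp π')))) wdF q) = q := by
      rintro ⟨x⟩
      show projFun s v g1 e1' e2' π' x.1 = ⟦x⟧
      rw [projFun, dif_neg x.2]
    have hFG : ∀ q : Quotient (scSetoid (Lp π')),
        Quotient.lift (fun x : {e : E // s e ≠ v} =>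
            (⟦x.1⟧ : Quotient (scSetoid (Lp π')))) wdF
          (Quotient.lift (projFun s v g1 e1' e2' π') wdG q) = q := by
      rintro ⟨e⟩
      show Quotient.lift _ wdF (projFun s v g1 e1' e2' π' e) = ⟦e⟧
      by_cases hsv : s e = v
      · rcases hOut e hsv with rfl | rfl
        · rw [projFun, dif_pos hsv, if_pos rfl]
          exact Quotient.sound (⟨1, by simpa using hLpe1 π'⟩ :
            (Lp π').SameCycle e1'.1 g1)
        · rw [projFun, dif_pos hsv, if_neg (Ne.symm hg12)]
          exact Quotient.sound (⟨1, by simpa using hLpe2 π'⟩ :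
            (Lp π').SameCycle e2'.1 g2)
      · rw [projFun, dif_neg hsv]
        rfl
    rw [numCycles_eq_nat_card, numCycles_eq_nat_card]
    exact Nat.card_congr
      ⟨Quotient.lift (projFun s v g1 e1' e2' π') wdG,
       Quotient.lift (fun x : {e : E // s e ≠ v} =>
            (⟦x.1⟧ : Quotient (scSetoid (Lp π')))) wdF, hFG, hGF⟩
  -- for valid π', the two in-edges lie on a common circuit (cut vertex!)
  have hsc : ∀ π' : Equiv.Perm {e : E // s e ≠ v}, (∀ x, s' (π' x) = t' x) → π'.SameCycle e1' e2' := by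
    intro π' hv'
    have hk0 : 0 < orderOf π' := orderOf_pos π'
    have hPk : s' ((π' ^ orderOf π') e1') ∈ A := by
      rw [pow_orderOf_eq_one, Equiv.Perm.one_apply, hs']
      exact hA1
    have hex : ∃ i, 0 < i ∧ s' ((π' ^ i) e1') ∈ A := ⟨orderOf π', hk0, hPk⟩
    obtain ⟨hi0pos, hi0A⟩ := Nat.find_spec hex
    have h1A : s' ((π' ^ 1) e1') ∉ A := by
      rw [pow_one, hv', ht' e1', show e1'.1 = e1 from rfl, if_pos hte1, ← hg1def]
      exact hkey
    have hi0ne1 : Nat.find hex ≠ 1 := fun h => h1A (h ▸ hi0A)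
    have h2le : 2 ≤ Nat.find hex := by
      rcases Nat.lt_or_ge (Nat.find hex) 2 with h | h
      · interval_cases h' : Nat.find hex <;> omega
      · exact h
    have hjlt : Nat.find hex - 1 < Nat.find hex := by omega
    have hjA : s' ((π' ^ (Nat.find hex - 1)) e1') ∉ A := fun hmem =>
      Nat.find_min hex hjlt ⟨by omega, hmem⟩
    have hjt : t' ((π' ^ (Nat.find hex - 1)) e1') ∈ A := by
      have h1 : (π' ^ (Nat.find hex - 1 + 1)) e1' = π' ((π' ^ (Nat.find hex - 1)) e1') :=
        perm_pow_succ_apply' π' _ e1'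
      have h2 : t' ((π' ^ (Nat.find hex - 1)) e1') =
          s' ((π' ^ (Nat.find hex - 1 + 1)) e1') := by rw [h1, hv']
      rw [h2, show Nat.find hex - 1 + 1 = Nat.find hex from by omega]
      exact hi0A
    have hxe2 : (π' ^ (Nat.find hex - 1)) e1' = e2' := by
      set x := (π' ^ (Nat.find hex - 1)) e1' with hxdef
      by_cases hx : t x.1 = v
      · rcases hIn' x hx with h | h
        · exfalso
          apply hjA
          rw [h, hs']
          exact hA1
        · exact h
      · exfalso
        have ht'x : t' x = t x.1 := by rw [ht' x, if_neg hx]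
        have hR : R (t x.1) (s x.1) := ⟨x.1, x.2, hx, Or.inr ⟨rfl, rfl⟩⟩
        have hmem : s x.1 ∈ A := hAcl _ _ (ht'x ▸ hjt) hR
        apply hjA
        rw [hs']
        exact hmem
    exact sameCycle_of_pow (Nat.find hex - 1) hxe2
  have hncswap : ∀ π' : Equiv.Perm {e : E // s e ≠ v}, (∀ x, s' (π' x) = t' x) →
      numCycles (Equiv.swap g1 g2 * Lp π') = numCycles π' + 1 := by
    intro π' hv'
    have h1 : (Lp π').SameCycle g1 g2 := by
      have t1 : (Lp π').SameCycle e1 g1 := ⟨1, by simpa using hLpe1 π'⟩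
      have t2 : (Lp π').SameCycle e2 g2 := ⟨1, by simpa using hLpe2 π'⟩
      exact (t1.symm.trans (hmap π' e1' e2' (hsc π' hv'))).trans t2
    rw [numCycles_swap_mul (Lp π') hg12 h1, hnc π']
  -- the joint lift map
  set Φ : Equiv.Perm {e : E // s e ≠ v} × Bool → Equiv.Perm E := fun p =>
    (if p.2 then 1 else Equiv.swap g1 g2) * Lp p.1 with hΦdef
  set validE : Finset (Equiv.Perm E) :=
    Finset.univ.filter (fun π : Equiv.Perm E => ∀ e, s (π e) = t e) with hvalidE
  set validE' : Finset (Equiv.Perm {e : E // s e ≠ v}) :=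
    Finset.univ.filter (fun π' : Equiv.Perm {e : E // s e ≠ v} => ∀ x, s' (π' x) = t' x) with hvalidE'
  have hΦe1 : ∀ (ρ : Equiv.Perm {e : E // s e ≠ v}) (b : Bool),
      Φ (ρ, b) e1 = if b then g1 else g2 := by
    intro ρ b
    cases b
    · show (Equiv.swap g1 g2 * Lp ρ) e1 = g2
      rw [Equiv.Perm.mul_apply, hLpe1 ρ, Equiv.swap_apply_left]
    · show (1 * Lp ρ) e1 = g1
      rw [one_mul, hLpe1 ρ]
  have hΦinj : ∀ p ∈ validE' ×ˢ (Finset.univ : Finset Bool),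
      ∀ q ∈ validE' ×ˢ (Finset.univ : Finset Bool), Φ p = Φ q → p = q := by
    rintro ⟨π₁, b₁⟩ - ⟨π₂, b₂⟩ - h
    have happ : ∀ e, Φ (π₁, b₁) e = Φ (π₂, b₂) e := fun e => by rw [h]
    have hb : b₁ = b₂ := by
      have h1 := happ e1
      rw [hΦe1 π₁ b₁, hΦe1 π₂ b₂] at h1
      cases b₁ <;> cases b₂
      · rfl
      · exact absurd h1 hg12.symm
      · exact absurd h1 hg12
      · rfl
    subst hb
    have hLeq : Lp π₁ = Lp π₂ := by
      cases b₁
      · exact mul_left_cancel h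
      · exact mul_left_cancel h
    have hπeq : π₁ = π₂ := by
      refine Equiv.ext fun x => ?_
      apply Subtype.ext
      by_cases hx : t x.1 = v
      · rcases hIn' x hx with hh | hh
        · rw [hh, ← hLpg1 π₁, ← hLpg1 π₂, hLeq]
        · rw [hh, ← hLpg2 π₁, ← hLpg2 π₂, hLeq]
      · have hx1 : x ≠ e1' := fun hh => hx (by rw [hh]; exact hte1)
        have hx2 : x ≠ e2' := fun hh => hx (by rw [hh]; exact hte2)
        rw [← hLpother π₁ x hx1 hx2, ← hLpother π₂ x hx1 hx2, hLeq]
    rw [hπeq]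
  have himage : (validE' ×ˢ (Finset.univ : Finset Bool)).image Φ = validE := by
    ext π
    constructor
    · intro hmem
      obtain ⟨⟨π', b⟩, hm, rfl⟩ := Finset.mem_image.1 hmem
      have hv' : ∀ x, s' (π' x) = t' x :=
        (Finset.mem_filter.1 (Finset.mem_product.1 hm).1).2
      refine Finset.mem_filter.2 ⟨Finset.mem_univ _, ?_⟩
      intro e
      cases b
      · show s ((Equiv.swap g1 g2 * Lp π') e) = t e
        rw [Equiv.Perm.mul_apply, hswaps, hLpvalid π' hv']
      · show s ((1 * Lp π') e) = t e
        rw [one_mul, hLpvalid π' hv']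
    · intro hmem
      have hπ : ∀ e, s (π e) = t e := (Finset.mem_filter.1 hmem).2
      -- the contraction of π
      set cfun : {e : E // s e ≠ v} → {e : E // s e ≠ v} := fun x =>
        if h : t x.1 = v then ⟨π (f x.1), by
          rw [hπ]
          rcases hIn x.1 h with h' | h'
          · rw [h']; exact htg1
          · rw [h']; exact htg2⟩
        else ⟨π x.1, by rw [hπ]; exact h⟩ with hcdef
      have hc1 : ∀ (x : {e : E // s e ≠ v}) (h : t x.1 = v), (cfun x).1 = π (f x.1) := by
        intro x h
        rw [hcdef]
        simp only [dif_pos h]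
      have hc2 : ∀ (x : {e : E // s e ≠ v}), t x.1 ≠ v → (cfun x).1 = π x.1 := by
        intro x h
        rw [hcdef]
        simp only [dif_neg h]
      have hcinj : Function.Injective cfun := by
        intro a b hab
        have hab1 : (cfun a).1 = (cfun b).1 := congrArg Subtype.val hab
        by_cases ha : t a.1 = v <;> by_cases hb : t b.1 = v
        · rw [hc1 a ha, hc1 b hb] at hab1
          exact Subtype.ext (hf_inj a.1 b.1 ha hb (π.injective hab1))
        · rw [hc1 a ha, hc2 b hb] at hab1
          have heq : f a.1 = b.1 := π.injective hab1
          exact absurd (heq ▸ hf_start a.1 ha) b.2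
        · rw [hc2 a ha, hc1 b hb] at hab1
          have heq : f b.1 = a.1 := (π.injective hab1).symm
          exact absurd (heq ▸ hf_start b.1 hb) a.2
        · rw [hc2 a ha, hc2 b hb] at hab1
          exact Subtype.ext (π.injective hab1)
      set Cp : Equiv.Perm {e : E // s e ≠ v} :=
        Equiv.ofBijective cfun (Finite.injective_iff_bijective.1 hcinj) with hCpdef
      have hCpapp : ∀ x, Cp x = cfun x := fun _ => rfl
      have hCpvalid : ∀ x, s' (Cp x) = t' x := by
        intro x
        rw [hCpapp, hs', ht' x]
        by_cases h : t x.1 = v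
        · rw [hc1 x h, hπ, if_pos h]
        · rw [hc2 x h, hπ, if_neg h]
      have hCpmem : Cp ∈ validE' := Finset.mem_filter.2 ⟨Finset.mem_univ _, hCpvalid⟩
      have hπe1' : s (π e1) = v := by rw [hπ]; exact hte1
      have hπe2' : s (π e2) = v := by rw [hπ]; exact hte2
      rcases hOut (π e1) hπe1' with hb1 | hb1
      · -- aligned lift
        have hb2 : π e2 = g2 :=
          (hOut (π e2) hπe2').resolve_left
            (fun h => he12 (π.injective (h.trans hb1.symm)).symm)
        refine Finset.mem_image.2 ⟨(Cp, true),
          Finset.mem_product.2 ⟨hCpmem, Finset.mem_univ _⟩, ?_⟩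
        show 1 * Lp Cp = π
        rw [one_mul]
        refine Equiv.ext fun e => ?_
        rcases eq_or_ne e e1 with rfl | h1
        · rw [hLpe1 Cp, hb1]
        rcases eq_or_ne e e2 with rfl | h2
        · rw [hLpe2 Cp, hb2]
        by_cases hsv : s e = v
        · rcases hOut e hsv with rfl | rfl
          · rw [hLpg1 Cp, hCpapp, hc1 e1' hte1]
          · rw [hLpg2 Cp, hCpapp, hc1 e2' hte2]
        · have htev : t e ≠ v := fun h => by
            rcases hIn e h with rfl | rfl
            · exact h1 rfl
            · exact h2 rfl
          have hx1 : (⟨e, hsv⟩ : {e : E // s e ≠ v}) ≠ e1' :=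
            fun h => h1 (congrArg Subtype.val h)
          have hx2 : (⟨e, hsv⟩ : {e : E // s e ≠ v}) ≠ e2' :=
            fun h => h2 (congrArg Subtype.val h)
          rw [hLpother Cp ⟨e, hsv⟩ hx1 hx2, hCpapp, hc2 ⟨e, hsv⟩ htev]
      · -- crossed lift
        have hb2 : π e2 = g1 :=
          (hOut (π e2) hπe2').resolve_right
            (fun h => he12 (π.injective (h.trans hb1.symm)).symm)
        refine Finset.mem_image.2 ⟨(Cp, false),
          Finset.mem_product.2 ⟨hCpmem, Finset.mem_univ _⟩, ?_⟩
        show Equiv.swap g1 g2 * Lp Cp = π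
        refine Equiv.ext fun e => ?_
        rw [Equiv.Perm.mul_apply]
        rcases eq_or_ne e e1 with rfl | h1
        · rw [hLpe1 Cp, Equiv.swap_apply_left, hb1]
        rcases eq_or_ne e e2 with rfl | h2
        · rw [hLpe2 Cp, Equiv.swap_apply_right, hb2]
        by_cases hsv : s e = v
        · rcases hOut e hsv with rfl | rfl
          · rw [hLpg1 Cp, hCpapp, hc1 e1' hte1]
            have hn1 : π (f e1'.1) ≠ g1 := fun h => htg1 (by rw [← hπ, h, hsg1])
            have hn2 : π (f e1'.1) ≠ g2 := fun h => htg1 (by rw [← hπ, h, hsg2])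
            rw [Equiv.swap_apply_of_ne_of_ne hn1 hn2]
          · rw [hLpg2 Cp, hCpapp, hc1 e2' hte2]
            have hn1 : π (f e2'.1) ≠ g1 := fun h => htg2 (by rw [← hπ, h, hsg1])
            have hn2 : π (f e2'.1) ≠ g2 := fun h => htg2 (by rw [← hπ, h, hsg2])
            rw [Equiv.swap_apply_of_ne_of_ne hn1 hn2]
        · have htev : t e ≠ v := fun h => by
            rcases hIn e h with rfl | rfl
            · exact h1 rfl
            · exact h2 rfl
          have hx1 : (⟨e, hsv⟩ : {e : E // s e ≠ v}) ≠ e1' :=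
            fun h => h1 (congrArg Subtype.val h)
          have hx2 : (⟨e, hsv⟩ : {e : E // s e ≠ v}) ≠ e2' :=
            fun h => h2 (congrArg Subtype.val h)
          rw [hLpother Cp ⟨e, hsv⟩ hx1 hx2, hCpapp, hc2 ⟨e, hsv⟩ htev]
          have hn1 : π e ≠ g1 := fun h => htev (by rw [← hπ, h, hsg1])
          have hn2 : π e ≠ g2 := fun h => htev (by rw [← hπ, h, hsg2])
          rw [Equiv.swap_apply_of_ne_of_ne hn1 hn2]
  -- final computation
  rw [circuitPoly, circuitPoly]
  rw [← hvalidE]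
  rw [show (Finset.univ.filter (fun π : Equiv.Perm {e : E // s e ≠ v} => ∀ e, s' (π e) = t' e))
      = validE' from rfl]
  rw [← himage]
  rw [Finset.sum_image hΦinj, Finset.sum_product]
  rw [Finset.mul_sum]
  refine Finset.sum_congr rfl ?_
  intro π' hπ'
  have hv' : ∀ x, s' (π' x) = t' x := (Finset.mem_filter.1 hπ').2
  have h1 : numCycles (Φ (π', true)) = numCycles π' := by simpa [hΦdef] using hnc π'
  have h2 : numCycles (Φ (π', false)) = numCycles π' + 1 := by
    simpa [hΦdef] using hncswap π' hv'
  rw [Fintype.sum_bool, h1, h2, pow_succ]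
  ring
end

section
/- Degree bound for the circuit-counting polynomial: for any 2-in/2-out digraph G on n vertices with K(G) connected components, deg J(G;x) ≤ n + K(G). -/
open scoped BigOperators
open Polynomial

/-- The number of connected components of the underlying undirected multigraph. -/
noncomputable def numComponents {V E : Type*} (s t : E → V) : ℕ :=
  Nat.card (Quotient (Relation.EqvGen.setoid (Adj s t)))

/-! ### Auxiliary machinery -/

open Relation Equiv Equiv.Perm

section Counting
variable {α : Type*} [DecidableEq α]

private lemma eqvGen_insert' {S : Finset (α × α)} {p : α × α} {x y : α}
    (h : EqvGen (fun a b => (a, b) ∈ insert p S) x y) :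
    EqvGen (fun a b => (a, b) ∈ S) x y ∨
      (EqvGen (fun a b => (a, b) ∈ S) x p.1 ∧ EqvGen (fun a b => (a, b) ∈ S) p.2 y) ∨
      (EqvGen (fun a b => (a, b) ∈ S) x p.2 ∧ EqvGen (fun a b => (a, b) ∈ S) p.1 y) := by
  induction h with
  | rel a b hab =>
    rcases Finset.mem_insert.1 hab with h | h
    · rcases Prod.mk.injEq .. ▸ h with ⟨rfl, rfl⟩
      exact Or.inr (Or.inl ⟨EqvGen.refl _, EqvGen.refl _⟩)
    · exact Or.inl (EqvGen.rel _ _ h)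
  | refl a => exact Or.inl (EqvGen.refl _)
  | symm a b _ ih =>
    rcases ih with h | ⟨h1, h2⟩ | ⟨h1, h2⟩
    · exact Or.inl (h.symm _ _)
    · exact Or.inr (Or.inr ⟨h2.symm _ _, h1.symm _ _⟩)
    · exact Or.inr (Or.inl ⟨h2.symm _ _, h1.symm _ _⟩)
  | trans a b c _ _ ih1 ih2 =>
    rcases ih1 with h1 | ⟨h1a, h1b⟩ | ⟨h1a, h1b⟩ <;>
      rcases ih2 with h2 | ⟨h2a, h2b⟩ | ⟨h2a, h2b⟩
    · exact Or.inl (h1.trans _ _ _ h2)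
    · exact Or.inr (Or.inl ⟨h1.trans _ _ _ h2a, h2b⟩)
    · exact Or.inr (Or.inr ⟨h1.trans _ _ _ h2a, h2b⟩)
    · exact Or.inr (Or.inl ⟨h1a, h1b.trans _ _ _ h2⟩)
    · exact Or.inr (Or.inl ⟨h1a, h2b⟩)
    · exact Or.inl (h1a.trans _ _ _ h2b)
    · exact Or.inr (Or.inr ⟨h1a, h1b.trans _ _ _ h2⟩)
    · exact Or.inl (h1a.trans _ _ _ h2b)
    · exact Or.inr (Or.inr ⟨h1a, h2b⟩)

private lemma card_le_card_quot' [Finite α] (S : Finset (α × α)) :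
    Nat.card α ≤ S.card +
      Nat.card (Quotient (EqvGen.setoid (fun a b => (a, b) ∈ S))) := by
  classical
  induction S using Finset.induction_on with
  | empty =>
    rw [Finset.card_empty, Nat.zero_add]
    refine Nat.card_le_card_of_injective (fun a => Quotient.mk _ a) fun a b h => ?_
    have := Quotient.exact h
    clear h
    induction this with
    | rel a b h => exact absurd h (by simp)
    | refl a => rfl
    | symm a b _ ih => exact ih.symm
    | trans a b c _ _ ih1 ih2 => exact ih1.trans ih2
  | @insert p S hp ih =>
    set Q1 := Quotient (EqvGen.setoid (fun a b : α => (a, b) ∈ S))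
    set Q2 := Quotient (EqvGen.setoid (fun a b : α => (a, b) ∈ insert p S))
    have hmap : ∀ a b : α, EqvGen (fun a b => (a, b) ∈ S) a b →
        EqvGen (fun a b => (a, b) ∈ insert p S) a b := fun a b h =>
      h.mono fun a b hab => Finset.mem_insert_of_mem hab
    let g : Q1 → Q2 := Quotient.map id (fun a b h => hmap a b h)
    let f : Q1 → Option Q2 := fun x =>
      if x = Quotient.mk _ p.1 then none else some (g x)
    have hf : Function.Injective f := by
      intro x y hxy
      by_cases hx : x = Quotient.mk _ p.1 <;> by_cases hy : y = Quotient.mk _ p.1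
      · rw [hx, hy]
      · simp only [f, if_pos hx, if_neg hy] at hxy; exact absurd hxy.symm (Option.some_ne_none _)
      · simp only [f, if_neg hx, if_pos hy] at hxy; exact absurd hxy (Option.some_ne_none _)
      · simp only [f, if_neg hx, if_neg hy, Option.some.injEq] at hxy
        obtain ⟨a, rfl⟩ := Quotient.exists_rep x
        obtain ⟨b, rfl⟩ := Quotient.exists_rep y
        have : EqvGen (fun a b => (a, b) ∈ insert p S) a b := Quotient.exact hxy
        rcases eqvGen_insert' this with h | ⟨h1, _⟩ | ⟨_, h2⟩
        · exact Quotient.sound h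
        · exact absurd (Quotient.sound h1) hx
        · exact absurd (Quotient.sound (h2.symm _ _)) hy
    haveI hfin : Finite Q2 := Quotient.finite _
    haveI := Fintype.ofFinite Q2
    have h1 : Nat.card Q1 ≤ Nat.card Q2 + 1 := by
      have := Nat.card_le_card_of_injective f hf
      rwa [Finite.card_option] at this
    calc Nat.card α ≤ S.card + Nat.card Q1 := ih
      _ ≤ S.card + (Nat.card Q2 + 1) := by omega
      _ = (insert p S).card + Nat.card Q2 := by rw [Finset.card_insert_of_notMem hp]; omega

end Counting

section Orbits
variable {E : Type*} [Fintype E] [DecidableEq E] (π : Equiv.Perm E)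

/-- The type of orbits: nontrivial cycles plus fixed points. -/
private abbrev Orb : Type _ := {c : Perm E // c ∈ π.cycleFactorsFinset} ⊕ {e : E // π e = e}

variable {π}

private noncomputable def orbitOf (e : E) : Orb π :=
  if h : π e = e then Sum.inr ⟨e, h⟩
  else Sum.inl ⟨π.cycleOf e, cycleOf_mem_cycleFactorsFinset_iff.2 (mem_support.2 h)⟩

private lemma card_orb : Fintype.card (Orb π) = numCycles π := by
  rw [numCycles, Fintype.card_sum, Fintype.card_coe, Fintype.card_subtype, cycleType_def,
    Multiset.card_map]
  rfl

private lemma orbitOf_apply (e : E) : orbitOf (π := π) (π e) = orbitOf e := by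
  by_cases h : π e = e
  · rw [h]
  · have h2 : π (π e) ≠ π e := fun hh => h (π.injective hh)
    rw [orbitOf, orbitOf, dif_neg h, dif_neg h2]
    exact congrArg _ (Subtype.ext (π.cycleOf_self_apply e))

private lemma sameCycle_of_orbitOf_eq {e f : E} (h : orbitOf (π := π) e = orbitOf f) :
    π.SameCycle e f := by
  by_cases he : π e = e <;> by_cases hf : π f = f <;>
    rw [orbitOf, orbitOf] at h
  · rw [dif_pos he, dif_pos hf] at h
    cases Subtype.ext_iff.1 (Sum.inr.inj h)
    exact SameCycle.refl _ _
  · rw [dif_pos he, dif_neg hf] at h; exact absurd h (by simp)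
  · rw [dif_neg he, dif_pos hf] at h; exact absurd h (by simp)
  · rw [dif_neg he, dif_neg hf] at h
    have hc : π.cycleOf e = π.cycleOf f := Subtype.ext_iff.1 (Sum.inl.inj h)
    have : f ∈ (π.cycleOf f).support :=
      mem_support_cycleOf_iff.2 ⟨SameCycle.refl _ _, mem_support.2 hf⟩
    rw [← hc] at this
    exact (mem_support_cycleOf_iff.1 this).1

private noncomputable def edgeOf : Orb π → E
  | Sum.inr e => e.1
  | Sum.inl c =>
      (Finset.nonempty_iff_ne_empty.2 (fun hh =>
        (mem_cycleFactorsFinset_iff.1 c.2).1.ne_one (support_eq_empty_iff.1 hh))).choose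

private lemma orbitOf_edgeOf (o : Orb π) : orbitOf (π := π) (edgeOf o) = o := by
  cases o with
  | inr e =>
    show orbitOf (π := π) e.1 = Sum.inr e
    rw [orbitOf, dif_pos e.2]
  | inl c =>
    have hmem := (Finset.nonempty_iff_ne_empty.2 (fun hh =>
      (mem_cycleFactorsFinset_iff.1 c.2).1.ne_one (support_eq_empty_iff.1 hh))).choose_spec
    set e := (Finset.nonempty_iff_ne_empty.2 (fun hh =>
      (mem_cycleFactorsFinset_iff.1 c.2).1.ne_one (support_eq_empty_iff.1 hh))).choose
    have hce : c.1 e = π e := (mem_cycleFactorsFinset_iff.1 c.2).2 e hmem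
    have hne : π e ≠ e := hce ▸ mem_support.1 hmem
    have hedge : edgeOf (π := π) (Sum.inl c) = e := rfl
    rw [hedge, orbitOf, dif_neg hne]
    exact congrArg _ (Subtype.ext (cycle_is_cycleOf hmem c.2).symm)

end Orbits

section Valid
variable {V E : Type*} [Fintype E] [DecidableEq E]
  {s t : E → V} {π : Equiv.Perm E}

set_option linter.unusedSectionVars false

private lemma eqvGen_t_pow (hs : ∀ e, s (π e) = t e) (e : E) :
    ∀ n : ℕ, EqvGen (Adj s t) (t e) (t ((π ^ n) e))
  | 0 => EqvGen.refl _
  | n + 1 => by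
    have step : Adj s t (t ((π ^ n) e)) (t ((π ^ (n+1)) e)) := by
      refine ⟨π ((π ^ n) e), Or.inl ⟨hs _, ?_⟩⟩
      rw [pow_succ', Equiv.Perm.mul_apply]
    exact (eqvGen_t_pow hs e n).trans _ _ _ (EqvGen.rel _ _ step)

private lemma eqvGen_t_of_sameCycle (hs : ∀ e, s (π e) = t e) {e f : E}
    (h : π.SameCycle e f) : EqvGen (Adj s t) (t e) (t f) := by
  obtain ⟨k, hk⟩ := h
  rcases Int.natAbs_eq k with hn | hn
  · rw [hn, zpow_natCast] at hk
    exact hk ▸ eqvGen_t_pow hs e k.natAbs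
  · rw [hn] at hk
    have : (π ^ k.natAbs) f = e := by
      rw [← hk, ← Equiv.Perm.mul_apply, ← zpow_natCast, ← zpow_add]
      simp
    have h3 := eqvGen_t_pow hs f k.natAbs
    rw [this] at h3
    exact h3.symm _ _

end Valid

private lemma key_bound {V E : Type*} [Fintype V] [Fintype E]
    [DecidableEq V] [DecidableEq E] (s t : E → V) (h22 : TwoInTwoOut s t)
    (π : Equiv.Perm E) (hs : ∀ e, s (π e) = t e) :
    numCycles π ≤ Fintype.card V + numComponents s t := by
  classical
  choose e₁ e₂ hne hset using fun v => Finset.card_eq_two.1 (h22 v).1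
  have ht1 : ∀ v, t (e₁ v) = v := fun v => by
    have h : e₁ v ∈ ({e₁ v, e₂ v} : Finset E) := by simp
    rw [← hset v] at h; exact (Finset.mem_filter.1 h).2
  have ht2 : ∀ v, t (e₂ v) = v := fun v => by
    have h : e₂ v ∈ ({e₁ v, e₂ v} : Finset E) := by simp
    rw [← hset v] at h; exact (Finset.mem_filter.1 h).2
  have hin : ∀ v e, t e = v → e = e₁ v ∨ e = e₂ v := fun v e he => by
    have h : e ∈ ({e₁ v, e₂ v} : Finset E) := by
      rw [← hset v]; exact Finset.mem_filter.2 ⟨Finset.mem_univ _, he⟩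
    simpa using h
  set S : Finset (Orb π × Orb π) :=
    Finset.image (fun v => (orbitOf (π := π) (e₁ v), orbitOf (π := π) (e₂ v)))
      Finset.univ with hS
  set Q := Quotient (EqvGen.setoid (fun a b : Orb π => (a, b) ∈ S)) with hQ
  have claim1 : ∀ (v : V) (e f : E), t e = v → t f = v →
      (Quotient.mk _ (orbitOf (π := π) e) : Q) = Quotient.mk _ (orbitOf (π := π) f) := by
    intro v e f he hf
    have hbase : (Quotient.mk _ (orbitOf (π := π) (e₁ v)) : Q) =
        Quotient.mk _ (orbitOf (π := π) (e₂ v)) := by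
      refine Quotient.sound (EqvGen.rel _ _ ?_)
      rw [hS]
      exact Finset.mem_image_of_mem _ (Finset.mem_univ v)
    rcases hin v e he with rfl | rfl <;> rcases hin v f hf with rfl | rfl
    · rfl
    · exact hbase
    · exact hbase.symm
    · rfl
  have claim4 : ∀ u w : V, EqvGen (Adj s t) u w →
      (Quotient.mk _ (orbitOf (π := π) (e₁ u)) : Q) =
        Quotient.mk _ (orbitOf (π := π) (e₁ w)) := by
    intro u w h
    induction h with
    | rel u w h =>
      obtain ⟨g, hg⟩ := h
      have hkey : ∀ a b : V, s g = a → t g = b →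
          (Quotient.mk _ (orbitOf (π := π) (e₁ a)) : Q) =
            Quotient.mk _ (orbitOf (π := π) (e₁ b)) := by
        intro a b hsg htg
        have h1 : t (π.symm g) = a := by
          rw [← hsg]
          conv_rhs => rw [← Equiv.apply_symm_apply π g]
          rw [hs (π.symm g)]
        have h2 : orbitOf (π := π) (π.symm g) = orbitOf (π := π) g := by
          conv_rhs => rw [← Equiv.apply_symm_apply π g]
          rw [orbitOf_apply]
        calc (Quotient.mk _ (orbitOf (π := π) (e₁ a)) : Q)
            = Quotient.mk _ (orbitOf (π := π) (π.symm g)) :=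
              (claim1 a (e₁ a) (π.symm g) (ht1 a) h1)
          _ = Quotient.mk _ (orbitOf (π := π) g) := by rw [h2]
          _ = Quotient.mk _ (orbitOf (π := π) (e₁ b)) :=
              claim1 b g (e₁ b) htg (ht1 b)
      rcases hg with ⟨hsg, htg⟩ | ⟨hsg, htg⟩
      · exact hkey u w hsg htg
      · exact (hkey w u hsg htg).symm
    | refl u => rfl
    | symm _ _ _ ih => exact ih.symm
    | trans _ _ _ _ _ ih1 ih2 => exact ih1.trans ih2
  have hwd : ∀ a b : Orb π, EqvGen (fun a b => (a, b) ∈ S) a b →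
      EqvGen (Adj s t) (t (edgeOf a)) (t (edgeOf b)) := by
    intro a b h
    induction h with
    | rel a b hab =>
      rw [hS] at hab
      obtain ⟨v, -, hv⟩ := Finset.mem_image.1 hab
      obtain ⟨rfl, rfl⟩ := Prod.mk.injEq .. ▸ hv
      have h1 : π.SameCycle (edgeOf (π := π) (orbitOf (π := π) (e₁ v))) (e₁ v) :=
        sameCycle_of_orbitOf_eq (by rw [orbitOf_edgeOf])
      have h2 : π.SameCycle (edgeOf (π := π) (orbitOf (π := π) (e₂ v))) (e₂ v) :=
        sameCycle_of_orbitOf_eq (by rw [orbitOf_edgeOf])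
      have g1 := eqvGen_t_of_sameCycle hs h1
      have g2 := eqvGen_t_of_sameCycle hs h2
      rw [ht1 v] at g1
      rw [ht2 v] at g2
      exact g1.trans _ _ _ (g2.symm _ _)
    | refl a => exact EqvGen.refl _
    | symm _ _ _ ih => exact ih.symm _ _
    | trans _ _ _ _ _ ih1 ih2 => exact ih1.trans _ _ _ ih2
  set C := Quotient (EqvGen.setoid (Adj s t)) with hC
  let φ : Q → C := Quotient.map (fun o => t (edgeOf (π := π) o)) hwd
  have hinj : Function.Injective φ := by
    intro x y hxy
    obtain ⟨a, rfl⟩ := Quotient.exists_rep x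
    obtain ⟨b, rfl⟩ := Quotient.exists_rep y
    have h : EqvGen (Adj s t) (t (edgeOf (π := π) a)) (t (edgeOf (π := π) b)) :=
      Quotient.exact hxy
    have h4 := claim4 _ _ h
    have ha : (Quotient.mk _ a : Q) =
        Quotient.mk _ (orbitOf (π := π) (e₁ (t (edgeOf (π := π) a)))) := by
      have := claim1 (t (edgeOf (π := π) a)) (edgeOf (π := π) a) (e₁ _) rfl (ht1 _)
      rwa [orbitOf_edgeOf] at this
    have hb : (Quotient.mk _ b : Q) =
        Quotient.mk _ (orbitOf (π := π) (e₁ (t (edgeOf (π := π) b)))) := by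
      have := claim1 (t (edgeOf (π := π) b)) (edgeOf (π := π) b) (e₁ _) rfl (ht1 _)
      rwa [orbitOf_edgeOf] at this
    rw [ha, hb, h4]
  haveI : Finite C := Quotient.finite _
  have hQC : Nat.card Q ≤ Nat.card C := Nat.card_le_card_of_injective φ hinj
  have hA : Nat.card (Orb π) ≤ S.card + Nat.card Q := card_le_card_quot' S
  have hSC : S.card ≤ Fintype.card V := by
    rw [hS]
    exact le_trans (Finset.card_image_le) (by simp)
  have hcard : numCycles π = Nat.card (Orb π) := by
    rw [Nat.card_eq_fintype_card, card_orb]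
  have hcomp : numComponents s t = Nat.card C := rfl
  omega

/-- Degree bound for the circuit-counting polynomial: for a 2-in/2-out digraph `G` on `n`
vertices with `K(G)` connected components, `deg J(G;x) ≤ n + K(G)`. -/
theorem circuitPoly_natDegree_le {V E : Type*} [Fintype V] [Fintype E]
    [DecidableEq V] [DecidableEq E] (s t : E → V) (h22 : TwoInTwoOut s t) :
    (circuitPoly s t).natDegree ≤ Fintype.card V + numComponents s t := by
  classical
  rw [circuitPoly]
  refine Polynomial.natDegree_sum_le_of_forall_le _ _ fun π hπ => ?_
  rw [Polynomial.natDegree_X_pow]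
  exact key_bound s t h22 π ((Finset.mem_filter.1 hπ).2)
end
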